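/- arXiv:0704.3357 — 7 statements merged into one kernel-verified Lean document; each statement's English description precedes it below -/
import Mathlib

section
/- For all natural numbers m, n and every matrix M : Matrix (Fin m) (Fin n) ℂ, the squared generalized concurrence vanishes, i.e. (tr(M * Mᴴ))² = tr((M * Mᴴ)²), if and only if there exist vectors x : Fin m → ℂ and y : Fin n → ℂ with M = vecMulVec x y (i.e., the corresponding bipartite vector ψ is a product vector). -/
open Matrix Finset

theorem concurrence_sq_eq_zero_iff_product (m n : ℕ) (M : Matrix (Fin m) (Fin n) ℂ) :
    ((M * Mᴴ).trace) ^ 2 = ((M * Mᴴ) ^ 2).trace ↔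
      ∃ (x : Fin m → ℂ) (y : Fin n → ℂ), M = vecMulVec x y := by
  have key : (∑ a, ∑ a', ∑ b, ∑ b',
      ((Complex.normSq (M a b * M a' b' - M a' b * M a b')) : ℂ))
      = 2 * (((M * Mᴴ).trace) ^ 2 - ((M * Mᴴ) ^ 2).trace) := by
    have htr : (M * Mᴴ).trace = ∑ a, ∑ b, M a b * (starRingEnd ℂ) (M a b) := by
      simp [Matrix.trace, Matrix.mul_apply, Matrix.conjTranspose_apply, Matrix.diag]
    have htr2 : ((M * Mᴴ) ^ 2).trace
        = ∑ a, ∑ a', (∑ b, M a b * (starRingEnd ℂ) (M a' b)) *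
            (∑ b', M a' b' * (starRingEnd ℂ) (M a b')) := by
      simp [pow_two, Matrix.trace, Matrix.mul_apply, Matrix.conjTranspose_apply, Matrix.diag]
    rw [htr, htr2]
    have e1 : (∑ a, ∑ a', ∑ b, ∑ b',
        ((Complex.normSq (M a b * M a' b' - M a' b * M a b')) : ℂ))
        = ∑ a, ∑ a', ∑ b, ∑ b',
          ((M a b * (starRingEnd ℂ) (M a b)) * (M a' b' * (starRingEnd ℂ) (M a' b'))
          + (M a' b * (starRingEnd ℂ) (M a' b)) * (M a b' * (starRingEnd ℂ) (M a b'))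
          - (M a b * (starRingEnd ℂ) (M a' b)) * (M a' b' * (starRingEnd ℂ) (M a b'))
          - (M a' b * (starRingEnd ℂ) (M a b)) * (M a b' * (starRingEnd ℂ) (M a' b'))) := by
      refine Finset.sum_congr rfl fun a _ => Finset.sum_congr rfl fun a' _ =>
        Finset.sum_congr rfl fun b _ => Finset.sum_congr rfl fun b' _ => ?_
      rw [← Complex.mul_conj]
      simp only [map_sub, _root_.map_mul]
      ring
    rw [e1]
    simp only [Finset.sum_add_distrib, Finset.sum_sub_distrib]
    have swap2 : (∑ a, ∑ a', ∑ b, ∑ b',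
        (M a' b * (starRingEnd ℂ) (M a' b)) * (M a b' * (starRingEnd ℂ) (M a b')))
        = ∑ a, ∑ a', ∑ b, ∑ b',
        (M a b * (starRingEnd ℂ) (M a b)) * (M a' b' * (starRingEnd ℂ) (M a' b')) :=
      Finset.sum_comm
    have swap4 : (∑ a, ∑ a', ∑ b, ∑ b',
        (M a' b * (starRingEnd ℂ) (M a b)) * (M a b' * (starRingEnd ℂ) (M a' b')))
        = ∑ a, ∑ a', ∑ b, ∑ b',
        (M a b * (starRingEnd ℂ) (M a' b)) * (M a' b' * (starRingEnd ℂ) (M a b')) :=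
      Finset.sum_comm
    rw [swap2, swap4]
    have eA : ((∑ a, ∑ b, M a b * (starRingEnd ℂ) (M a b)) ^ 2)
        = ∑ a, ∑ a', ∑ b, ∑ b',
        (M a b * (starRingEnd ℂ) (M a b)) * (M a' b' * (starRingEnd ℂ) (M a' b')) := by
      rw [sq, Finset.sum_mul_sum]
      refine Finset.sum_congr rfl fun a _ => Finset.sum_congr rfl fun a' _ => ?_
      rw [Finset.sum_mul_sum]
    have eB : (∑ a, ∑ a', (∑ b, M a b * (starRingEnd ℂ) (M a' b)) *
            (∑ b', M a' b' * (starRingEnd ℂ) (M a b')))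
        = ∑ a, ∑ a', ∑ b, ∑ b',
        (M a b * (starRingEnd ℂ) (M a' b)) * (M a' b' * (starRingEnd ℂ) (M a b')) := by
      refine Finset.sum_congr rfl fun a _ => Finset.sum_congr rfl fun a' _ => ?_
      rw [Finset.sum_mul_sum]
    rw [eA, eB]
    ring
  have hminor : ((M * Mᴴ).trace) ^ 2 = ((M * Mᴴ) ^ 2).trace ↔
      ∀ a a' b b', M a b * M a' b' = M a' b * M a b' := by
    constructor
    · intro h
      have h0 : (∑ a, ∑ a', ∑ b, ∑ b',
          ((Complex.normSq (M a b * M a' b' - M a' b * M a b')) : ℂ)) = 0 := by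
        rw [key, h]; ring
      have h0' : (∑ a, ∑ a', ∑ b, ∑ b',
          Complex.normSq (M a b * M a' b' - M a' b * M a b')) = 0 := by
        have := h0
        push_cast at this
        exact_mod_cast this
      intro a a' b b'
      have hnonneg : ∀ a ∈ (univ : Finset (Fin m)), (0:ℝ) ≤ ∑ a', ∑ b, ∑ b',
          Complex.normSq (M a b * M a' b' - M a' b * M a b') := by
        intro a _
        refine Finset.sum_nonneg fun a' _ => Finset.sum_nonneg fun b _ =>
          Finset.sum_nonneg fun b' _ => Complex.normSq_nonneg _
      have h1 := (Finset.sum_eq_zero_iff_of_nonneg hnonneg).mp h0' a (mem_univ a)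
      have h2 := (Finset.sum_eq_zero_iff_of_nonneg (fun a' _ =>
        Finset.sum_nonneg fun b _ => Finset.sum_nonneg fun b' _ =>
          Complex.normSq_nonneg _)).mp h1 a' (mem_univ a')
      have h3 := (Finset.sum_eq_zero_iff_of_nonneg (fun b _ =>
        Finset.sum_nonneg fun b' _ => Complex.normSq_nonneg _)).mp h2 b (mem_univ b)
      have h4 := (Finset.sum_eq_zero_iff_of_nonneg (fun b' _ =>
        Complex.normSq_nonneg _)).mp h3 b' (mem_univ b')
      have := Complex.normSq_eq_zero.mp h4
      linear_combination this
    · intro h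
      have h0 : (∑ a, ∑ a', ∑ b, ∑ b',
          ((Complex.normSq (M a b * M a' b' - M a' b * M a b')) : ℂ)) = 0 := by
        refine Finset.sum_eq_zero fun a _ => Finset.sum_eq_zero fun a' _ =>
          Finset.sum_eq_zero fun b _ => Finset.sum_eq_zero fun b' _ => ?_
        rw [sub_eq_zero.mpr (h a a' b b')]
        simp
      have := key.symm.trans h0
      linear_combination this / 2
  rw [hminor]
  constructor
  · intro h
    by_cases hM : M = 0
    · exact ⟨0, 0, by ext a b; simp [hM, vecMulVec_apply]⟩
    · have : ∃ a b, M a b ≠ 0 := by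
        by_contra hc
        push_neg at hc
        exact hM (by ext a b; simp [hc])
      obtain ⟨a₀, b₀, h₀⟩ := this
      refine ⟨fun a => M a b₀, fun b => M a₀ b / M a₀ b₀, ?_⟩
      ext a b
      rw [vecMulVec_apply]
      have := h a a₀ b b₀
      field_simp
      linear_combination this
  · rintro ⟨x, y, rfl⟩ a a' b b'
    simp only [vecMulVec_apply]
    ring
end

section
/- Let d, r, N be natural numbers with r ≤ N, let e : Fin r → (Fin d → ℂ) be a family of pairwise orthogonal nonzero vectors (a subnormalized eigenensemble), and let ψ : Fin N → (Fin d → ℂ) satisfy Σ_{i} vecMulVec (ψ i) (star (ψ i)) = Σ_{α} vecMulVec (e α) (star (e α)). Then there exists a matrix z : Matrix (Fin N) (Fin r) ℂ with zᴴ * z = 1 (i.e., Σ_i conj(z i α) * z i β = δ_{αβ}) such that ψ i = Σ_α z i α • e α for every i. -/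
open Matrix Finset

namespace HJWaux

variable {d : ℕ}

noncomputable def ip (x y : Fin d → ℂ) : ℂ := ∑ j, (starRingEnd ℂ) (x j) * y j

lemma ip_conj (x y : Fin d → ℂ) : (starRingEnd ℂ) (ip x y) = ip y x := by
  simp [ip, map_sum, mul_comm]

lemma ip_self (x : Fin d → ℂ) :
    ip x x = ((∑ j, Complex.normSq (x j) : ℝ) : ℂ) := by
  simp [ip, Complex.normSq_eq_conj_mul_self]

lemma ip_self_eq_zero {x : Fin d → ℂ} (h : ip x x = 0) : x = 0 := by
  rw [ip_self] at h
  have h' : ∑ j, Complex.normSq (x j) = 0 := by exact_mod_cast h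
  funext j
  have := (Finset.sum_eq_zero_iff_of_nonneg (fun j _ => Complex.normSq_nonneg (x j))).1 h' j
    (mem_univ j)
  exact Complex.normSq_eq_zero.1 this

lemma ip_sub_left (x y z : Fin d → ℂ) : ip (x - y) z = ip x z - ip y z := by
  simp [ip, sub_mul, Finset.sum_sub_distrib]

lemma ip_sub_right (x y z : Fin d → ℂ) : ip x (y - z) = ip x y - ip x z := by
  simp [ip, mul_sub, Finset.sum_sub_distrib]

lemma ip_sum_right {M : ℕ} (x : Fin d → ℂ) (f : Fin M → Fin d → ℂ) :
    ip x (∑ i, f i) = ∑ i, ip x (f i) := by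
  simp only [ip, Finset.sum_apply, Finset.mul_sum]
  exact Finset.sum_comm

lemma ip_smul_right (c : ℂ) (x y : Fin d → ℂ) : ip x (c • y) = c * ip x y := by
  simp only [ip, Pi.smul_apply, smul_eq_mul, Finset.mul_sum]
  exact Finset.sum_congr rfl fun j _ => by ring

lemma sandwich {N r : ℕ} (ψ : Fin N → Fin d → ℂ) (e : Fin r → Fin d → ℂ)
    (h : ∀ j k, (∑ i, ψ i j * (starRingEnd ℂ) (ψ i k)) = ∑ α, e α j * (starRingEnd ℂ) (e α k))
    (u v : Fin d → ℂ) :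
    ∑ i, ip u (ψ i) * ip (ψ i) v = ∑ α, ip u (e α) * ip (e α) v := by
  have key : ∀ (M : ℕ) (f : Fin M → Fin d → ℂ),
      ∑ i, ip u (f i) * ip (f i) v
        = ∑ j, ∑ k, (starRingEnd ℂ) (u j) * v k * ∑ i, f i j * (starRingEnd ℂ) (f i k) := by
    intro M f
    simp only [ip]
    calc ∑ i, (∑ j, (starRingEnd ℂ) (u j) * f i j) * (∑ k, (starRingEnd ℂ) (f i k) * v k)
        = ∑ i, ∑ j, ∑ k, (starRingEnd ℂ) (u j) * v k * (f i j * (starRingEnd ℂ) (f i k)) := by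
          refine Finset.sum_congr rfl fun i _ => ?_
          rw [Finset.sum_mul_sum]
          exact Finset.sum_congr rfl fun j _ => Finset.sum_congr rfl fun k _ => by ring
      _ = ∑ j, ∑ k, ∑ i, (starRingEnd ℂ) (u j) * v k * (f i j * (starRingEnd ℂ) (f i k)) := by
          rw [Finset.sum_comm]
          exact Finset.sum_congr rfl fun j _ => Finset.sum_comm
      _ = ∑ j, ∑ k, (starRingEnd ℂ) (u j) * v k * ∑ i, f i j * (starRingEnd ℂ) (f i k) := by
          simp [Finset.mul_sum]
  rw [key N ψ, key r e]
  simp only [h]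

end HJWaux

open HJWaux

theorem schroedinger_HJW (d r N : ℕ) (hrN : r ≤ N) (e : Fin r → (Fin d → ℂ))
    (he_ne : ∀ α, e α ≠ 0)
    (he_orth : ∀ α β, α ≠ β → ∑ j : Fin d, (starRingEnd ℂ) (e α j) * e β j = 0)
    (ψ : Fin N → (Fin d → ℂ))
    (hψ : (∑ i : Fin N, vecMulVec (ψ i) (star (ψ i))) =
      ∑ α : Fin r, vecMulVec (e α) (star (e α))) :
    ∃ z : Matrix (Fin N) (Fin r) ℂ, zᴴ * z = 1 ∧
      ∀ i, ψ i = ∑ α : Fin r, z i α • e α := by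
  have hent : ∀ j k, (∑ i, ψ i j * (starRingEnd ℂ) (ψ i k))
      = ∑ α, e α j * (starRingEnd ℂ) (e α k) := by
    intro j k
    have := congrArg (fun M : Matrix (Fin d) (Fin d) ℂ => M j k) hψ
    simpa [Matrix.sum_apply, vecMulVec_apply, Pi.star_apply, RCLike.star_def] using this
  have hsand := sandwich ψ e hent
  have horth : ∀ α β, α ≠ β → ip (e α) (e β) = 0 := fun α β h => he_orth α β h
  set c : Fin r → ℂ := fun α => ip (e α) (e α) with hc
  have hc_ne : ∀ α, c α ≠ 0 := by
    intro α h
    exact he_ne α (ip_self_eq_zero h)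
  have hB : ∀ v : Fin d → ℂ, (∀ α, ip (e α) v = 0) → ∀ i, ip (ψ i) v = 0 := by
    intro v hv i
    have h0 : ∑ i, ip v (ψ i) * ip (ψ i) v = 0 := by
      rw [hsand v v]
      refine Finset.sum_eq_zero fun α _ => ?_
      rw [hv α, mul_zero]
    have h1 : ∑ i, ((Complex.normSq (ip (ψ i) v) : ℝ) : ℂ) = 0 := by
      rw [← h0]
      refine Finset.sum_congr rfl fun i _ => ?_
      rw [← ip_conj (ψ i) v, Complex.normSq_eq_conj_mul_self]
    have h2 : ∑ i, Complex.normSq (ip (ψ i) v) = 0 := by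
      have h1' : ((∑ i, Complex.normSq (ip (ψ i) v) : ℝ) : ℂ) = 0 := by push_cast; exact h1
      exact_mod_cast h1'
    have := (Finset.sum_eq_zero_iff_of_nonneg
      (fun i _ => Complex.normSq_nonneg (ip (ψ i) v))).1 h2 i (mem_univ i)
    exact Complex.normSq_eq_zero.1 this
  refine ⟨Matrix.of (fun i α => ip (e α) (ψ i) / c α), ?_, ?_⟩
  · ext α β
    rw [Matrix.mul_apply]
    simp only [conjTranspose_apply, Matrix.of_apply, RCLike.star_def]
    have hcconj : ∀ γ, (starRingEnd ℂ) (c γ) = c γ := fun γ => ip_conj _ _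
    have hstep : ∑ i, (starRingEnd ℂ) (ip (e α) (ψ i) / c α) * (ip (e β) (ψ i) / c β)
        = (∑ i, ip (e β) (ψ i) * ip (ψ i) (e α)) / (c α * c β) := by
      rw [Finset.sum_div]
      refine Finset.sum_congr rfl fun i _ => ?_
      rw [map_div₀, ip_conj, hcconj]
      field_simp
    rw [hstep, hsand (e β) (e α)]
    have hsum : ∑ γ, ip (e β) (e γ) * ip (e γ) (e α)
        = if α = β then c α * c β else 0 := by
      by_cases hab : α = β
      · subst hab
        rw [if_pos rfl]
        rw [Finset.sum_eq_single α (fun γ _ hγ => by rw [horth γ α hγ, mul_zero]) (by simp)]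
      · rw [if_neg hab]
        refine Finset.sum_eq_zero fun γ _ => ?_
        by_cases hgb : γ = β
        · subst hgb
          rw [horth γ α (fun h => hab h.symm), mul_zero]
        · rw [horth β γ (fun h => hgb h.symm), zero_mul]
    rw [hsum]
    by_cases hab : α = β
    · subst hab
      rw [if_pos rfl, Matrix.one_apply_eq]
      exact div_self (mul_ne_zero (hc_ne α) (hc_ne α))
    · rw [if_neg hab, Matrix.one_apply_ne hab, zero_div]
  · intro i
    set w : Fin d → ℂ := ψ i - ∑ α, (ip (e α) (ψ i) / c α) • e α with hw
    have hew : ∀ β, ip (e β) w = 0 := by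
      intro β
      rw [hw, ip_sub_right, ip_sum_right]
      have heq : ∑ α, ip (e β) ((ip (e α) (ψ i) / c α) • e α)
          = ip (e β) (ψ i) := by
        rw [Finset.sum_eq_single β
          (fun γ _ hγ => by rw [ip_smul_right, horth β γ (fun h => hγ h.symm), mul_zero])
          (by simp)]
        have hcb : ip (e β) (e β) = c β := rfl
        rw [ip_smul_right, hcb, div_mul_cancel₀ _ (hc_ne β)]
      rw [heq, sub_self]
    have hww : ip w w = 0 := by
      have h1 : ip (ψ i) w = 0 := hB w hew i
      have h2 : ip (∑ α, (ip (e α) (ψ i) / c α) • e α) w = 0 := by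
        have h3 : (starRingEnd ℂ) (ip w (∑ α, (ip (e α) (ψ i) / c α) • e α)) = 0 := by
          rw [ip_sum_right, map_sum]
          refine Finset.sum_eq_zero fun α _ => ?_
          have h4 : ip w (e α) = 0 := by
            rw [← ip_conj (e α) w, hew α, map_zero]
          rw [ip_smul_right, h4, mul_zero, map_zero]
        rwa [ip_conj] at h3
      rw [hw, ip_sub_left, h1, h2, sub_self]
    have hw0 : w = 0 := ip_self_eq_zero hww
    have := sub_eq_zero.mp hw0
    simpa using this
end

section
/- Let m, n be positive natural numbers and let ρ : Matrix (Fin m × Fin n) (Fin m × Fin n) ℂ be separable, i.e., there exist a finite index type I, weights p : I → ℝ with p i ≥ 0 and Σ_i p i = 1, and unit vectors x : I → (Fin m → ℂ), y : I → (Fin n → ℂ) with ρ = Σ_i (p i : ℂ) • (vecMulVec (x i) (star (x i)) ⊗ₖ vecMulVec (y i) (star (y i))). Then ρ admits such a separable decomposition with at most m² n² terms: there exist N ≤ m² * n², weights q : Fin N → ℝ with q j ≥ 0 and Σ_j q j = 1, and unit vectors x' : Fin N → (Fin m → ℂ), y' : Fin N → (Fin n → ℂ), with ρ = Σ_j (q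 j : ℂ) • (vecMulVec (x' j) (star (x' j)) ⊗ₖ vecMulVec (y' j) (star (y' j))). -/
open Matrix Kronecker Module

section Aux

lemma herm_prod {m n : ℕ} (u : Fin m → ℂ) (v : Fin n → ℂ) :
    IsSelfAdjoint (vecMulVec u (star u) ⊗ₖ vecMulVec v (star v)) := by
  show _ᴴ = _
  ext ⟨a, b⟩ ⟨c, d⟩
  simp [Matrix.conjTranspose_apply, Matrix.vecMulVec_apply]
  ring

lemma trace_vmv {k : ℕ} (u : Fin k → ℂ) (hu : ∑ a, ‖u a‖ ^ 2 = 1) :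
    (vecMulVec u (star u)).trace = 1 := by
  have : ∀ z : ℂ, z * (starRingEnd ℂ) z = ((‖z‖ ^ 2 : ℝ) : ℂ) := by
    intro z
    rw [Complex.mul_conj, Complex.normSq_eq_norm_sq]
  simp only [Matrix.trace, Matrix.diag_apply, Matrix.vecMulVec_apply, Pi.star_apply,
    Complex.star_def, this]
  rw [← Complex.ofReal_sum, hu, Complex.ofReal_one]

lemma trace_prod {m n : ℕ} (u : Fin m → ℂ) (v : Fin n → ℂ)
    (hu : ∑ a, ‖u a‖ ^ 2 = 1) (hv : ∑ b, ‖v b‖ ^ 2 = 1) :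
    (vecMulVec u (star u) ⊗ₖ vecMulVec v (star v)).trace = 1 := by
  rw [Matrix.trace_kronecker, trace_vmv u hu, trace_vmv v hv, one_mul]

variable (k : Type) [Fintype k] [DecidableEq k]

noncomputable abbrev MatC := Matrix k k ℂ

noncomputable def saVal : selfAdjoint (MatC k) →ₗ[ℝ] MatC k where
  toFun := Subtype.val
  map_add' _ _ := rfl
  map_smul' _ _ := rfl

noncomputable def skVal : skewAdjoint (MatC k) →ₗ[ℝ] MatC k where
  toFun := Subtype.val
  map_add' _ _ := rfl
  map_smul' _ _ := rfl

instance : FiniteDimensional ℝ (selfAdjoint (MatC k)) :=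
  FiniteDimensional.of_injective (saVal k) Subtype.val_injective

instance : FiniteDimensional ℝ (skewAdjoint (MatC k)) :=
  FiniteDimensional.of_injective (skVal k) Subtype.val_injective

noncomputable def saEquivSk : selfAdjoint (MatC k) ≃ₗ[ℝ] skewAdjoint (MatC k) where
  toFun x := ⟨Complex.I • (x : MatC k), by
    rw [skewAdjoint.mem_iff, star_smul, Complex.star_def, Complex.conj_I, x.2.star_eq, neg_smul]⟩
  invFun y := ⟨-(Complex.I • (y : MatC k)), by
    simp [selfAdjoint.mem_iff, star_smul, Complex.conj_I, skewAdjoint.mem_iff.mp y.2]⟩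
  left_inv x := by
    ext1
    simp [smul_smul, Complex.I_mul_I]
  right_inv y := by
    ext1
    simp [smul_smul, Complex.I_mul_I]
  map_add' x y := by ext1; simp
  map_smul' r x := by
    ext1
    simp [smul_comm r Complex.I]

set_option linter.unusedSectionVars false in
lemma finrank_sa : finrank ℝ (selfAdjoint (MatC k)) = Fintype.card k * Fintype.card k := by
  letI : Invertible (2 : ℝ) := invertibleOfNonzero two_ne_zero
  have h1 : finrank ℝ (MatC k) = Fintype.card k * Fintype.card k * 2 := by
    rw [Module.finrank_matrix, Complex.finrank_real_complex]
  have h2 := (StarModule.decomposeProdAdjoint ℝ (MatC k)).finrank_eq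
  rw [Module.finrank_prod] at h2
  rw [(saEquivSk k).finrank_eq] at h2 ⊢
  omega

end Aux

theorem caratheodory_separable (m n : ℕ) (hm : 0 < m) (hn : 0 < n)
    (ρ : Matrix (Fin m × Fin n) (Fin m × Fin n) ℂ)
    (I : Type) [Fintype I] (p : I → ℝ)
    (x : I → (Fin m → ℂ)) (y : I → (Fin n → ℂ))
    (hp : ∀ i, 0 ≤ p i) (hp1 : ∑ i, p i = 1)
    (hx : ∀ i, ∑ a, ‖x i a‖ ^ 2 = 1) (hy : ∀ i, ∑ b, ‖y i b‖ ^ 2 = 1)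
    (hρ : ρ = ∑ i, (p i : ℂ) •
      (vecMulVec (x i) (star (x i)) ⊗ₖ vecMulVec (y i) (star (y i)))) :
    ∃ N ≤ m ^ 2 * n ^ 2, ∃ (q : Fin N → ℝ) (x' : Fin N → (Fin m → ℂ))
      (y' : Fin N → (Fin n → ℂ)),
      (∀ j, 0 ≤ q j) ∧ (∑ j, q j = 1) ∧
      (∀ j, ∑ a, ‖x' j a‖ ^ 2 = 1) ∧ (∀ j, ∑ b, ‖y' j b‖ ^ 2 = 1) ∧
      ρ = ∑ j, (q j : ℂ) •
        (vecMulVec (x' j) (star (x' j)) ⊗ₖ vecMulVec (y' j) (star (y' j))) := by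
  classical
  have hcsmul : ∀ (r : ℝ) (A : MatC (Fin m × Fin n)), (r : ℂ) • A = r • A := by
    intro r A
    rw [← Complex.coe_algebraMap, algebraMap_smul]
  -- ρ is self-adjoint
  have hρsa : IsSelfAdjoint ρ := by
    rw [hρ]
    show star _ = _
    rw [star_sum]
    refine Finset.sum_congr rfl fun i _ => ?_
    rw [hcsmul, star_smul, star_trivial, (herm_prod (x i) (y i)).star_eq]
  let E := selfAdjoint (MatC (Fin m × Fin n))
  let S : Set E := {e | ∃ u v, (∑ a, ‖u a‖ ^ 2 = 1) ∧ (∑ b, ‖v b‖ ^ 2 = 1) ∧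
    (e : MatC (Fin m × Fin n)) = vecMulVec u (star u) ⊗ₖ vecMulVec v (star v)}
  let sE : I → E := fun i => ⟨_, herm_prod (x i) (y i)⟩
  let ρE : E := ⟨ρ, hρsa⟩
  have hmem : ρE ∈ convexHull ℝ S := by
    have hEq : ρE = ∑ i, p i • sE i := by
      apply Subtype.ext
      rw [AddSubmonoidClass.coe_finset_sum]
      show ρ = _
      rw [hρ]
      exact Finset.sum_congr rfl fun i _ => by
        rw [selfAdjoint.val_smul, hcsmul]
    rw [hEq]
    exact (convex_convexHull ℝ S).sum_mem (fun i _ => hp i) hp1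
      (fun i _ => subset_convexHull ℝ S ⟨x i, y i, hx i, hy i, rfl⟩)
  obtain ⟨ι, hι, z, w, hrange, haff, hwpos, hw1, hzw⟩ :=
    eq_pos_convex_span_of_mem_convexHull hmem
  letI := hι
  haveI hne : Nonempty ι := by
    rcases isEmpty_or_nonempty ι with h | h
    · haveI := h
      rw [Finset.univ_eq_empty, Finset.sum_empty] at hw1
      exact absurd hw1 zero_ne_one
    · exact h
  -- the real-trace functional
  let φ : E →ₗ[ℝ] ℝ := Complex.reLm ∘ₗ
    ((Matrix.traceLinearMap (Fin m × Fin n) ℂ ℂ).restrictScalars ℝ) ∘ₗ saVal (Fin m × Fin n)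
  have hφapp : ∀ e : E, φ e = ((e : MatC (Fin m × Fin n)).trace).re := fun _ => rfl
  have hφS : ∀ e ∈ S, φ e = 1 := by
    rintro e ⟨u, v, hu, hv, he⟩
    rw [hφapp, he, trace_prod u v hu hv, Complex.one_re]
  -- bound on the number of points
  have hcard : Fintype.card ι ≤ m ^ 2 * n ^ 2 := by
    have h1 := haff.finrank_vectorSpan_add_one
    have hker : vectorSpan ℝ (Set.range z) ≤ LinearMap.ker φ := by
      rw [vectorSpan_def]
      refine Submodule.span_le.mpr ?_
      rintro d hd
      obtain ⟨a, ha, b, hb, rfl⟩ := Set.mem_vsub.mp hd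
      rw [SetLike.mem_coe, LinearMap.mem_ker, vsub_eq_sub, map_sub,
        hφS a (hrange ha), hφS b (hrange hb), sub_self]
    have h2 : finrank ℝ (vectorSpan ℝ (Set.range z)) ≤ finrank ℝ (LinearMap.ker φ) :=
      Submodule.finrank_mono hker
    have h3 := LinearMap.finrank_range_add_finrank_ker φ
    have hE : finrank ℝ E = m ^ 2 * n ^ 2 := by
      rw [show finrank ℝ E = finrank ℝ (selfAdjoint (MatC (Fin m × Fin n))) from rfl,
        finrank_sa, Fintype.card_prod, Fintype.card_fin, Fintype.card_fin]
      ring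
    have hrpos : 0 < finrank ℝ (LinearMap.range φ) := by
      have hone : IsSelfAdjoint (1 : MatC (Fin m × Fin n)) := by
        show star _ = _; exact star_one _
      have hφ1 : φ ⟨1, hone⟩ ≠ 0 := by
        rw [hφapp]
        show ((1 : MatC (Fin m × Fin n)).trace).re ≠ 0
        rw [Matrix.trace_one]
        simp only [Complex.natCast_re, Fintype.card_prod, Fintype.card_fin]
        exact_mod_cast (Nat.mul_pos hm hn).ne'
      haveI : Nontrivial (LinearMap.range φ) :=
        nontrivial_of_ne ⟨φ ⟨1, hone⟩, LinearMap.mem_range_self _ _⟩ 0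
          (by simpa [Subtype.ext_iff] using hφ1)
      exact finrank_pos
    omega
  -- construct the decomposition
  choose u v hu hv hPz using fun i : ι => hrange (Set.mem_range_self i)
  refine ⟨Fintype.card ι, hcard, fun j => w ((Fintype.equivFin ι).symm j),
    fun j => u ((Fintype.equivFin ι).symm j), fun j => v ((Fintype.equivFin ι).symm j),
    fun j => (hwpos _).le, ?_, fun j => hu _, fun j => hv _, ?_⟩
  · rw [← hw1]
    exact Equiv.sum_comp (Fintype.equivFin ι).symm w
  · have hval : ρ = ∑ i, w i • (z i : MatC (Fin m × Fin n)) := by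
      have := congrArg Subtype.val hzw
      rw [AddSubmonoidClass.coe_finset_sum] at this
      exact this.symm
    rw [hval, ← Equiv.sum_comp (Fintype.equivFin ι).symm
      (fun i => w i • (z i : MatC (Fin m × Fin n)))]
    refine Finset.sum_congr rfl fun j _ => ?_
    rw [hcsmul, hPz ((Fintype.equivFin ι).symm j)]
end

section
/- For all natural numbers m, n and every matrix M : Matrix (Fin m) (Fin n) ℂ, one has (tr(M * Mᴴ))² − tr((M * Mᴴ)²) = 2 * Σ_{a < a'} Σ_{b < b'} ‖M a b * M a' b' − M a' b * M a b'‖², where the sums run over pairs a < a' in Fin m and b < b' in Fin n. In particular, the squared generalized concurrence c²(M) is a sum of absolute squares of quadratic polynomials (the 2×2 minors) in the entries of M. -/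
open Matrix Finset

private lemma half_sum {α : Type*} [Fintype α] [LinearOrder α] (F : α → α → ℂ)
    (hsymm : ∀ a b, F a b = F b a) (hdiag : ∀ a, F a a = 0) :
    ∑ a, ∑ b, F a b = 2 * ∑ a, ∑ b ∈ univ.filter (fun b => a < b), F a b := by
  have hlt : (∑ a, ∑ b ∈ univ.filter (fun b => b < a), F a b)
      = ∑ a, ∑ b ∈ univ.filter (fun b => a < b), F a b := by
    calc ∑ a, ∑ b ∈ univ.filter (fun b => b < a), F a b
        = ∑ a, ∑ b, if b < a then F a b else 0 := by
          simp [Finset.sum_filter]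
      _ = ∑ b, ∑ a, if b < a then F a b else 0 := Finset.sum_comm
      _ = ∑ b, ∑ a ∈ univ.filter (fun a => b < a), F a b := by
          simp [Finset.sum_filter]
      _ = ∑ a, ∑ b ∈ univ.filter (fun b => a < b), F a b := by
          refine Finset.sum_congr rfl fun b _ => Finset.sum_congr rfl fun a _ => hsymm a b
  have hsplit : ∀ a : α, ∑ b, F a b
      = (∑ b ∈ univ.filter (fun b => a < b), F a b) + ∑ b ∈ univ.filter (fun b => b < a), F a b := by
    intro a
    rw [← Finset.sum_filter_add_sum_filter_not univ (fun b => a < b) (F a)]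
    congr 1
    rw [Finset.sum_filter, Finset.sum_filter]
    refine Finset.sum_congr rfl fun b _ => ?_
    rcases lt_trichotomy a b with h | h | h
    · simp [h, asymm h]
    · subst h; simp [hdiag]
    · simp [h, not_lt.mpr h.le]
  calc ∑ a, ∑ b, F a b
      = (∑ a, ∑ b ∈ univ.filter (fun b => a < b), F a b)
        + ∑ a, ∑ b ∈ univ.filter (fun b => b < a), F a b := by
        rw [← Finset.sum_add_distrib]; exact Finset.sum_congr rfl fun a _ => hsplit a
    _ = 2 * ∑ a, ∑ b ∈ univ.filter (fun b => a < b), F a b := by rw [hlt]; ring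

private lemma sum_pair {α : Type*} [Fintype α] (L R : α → α → ℂ)
    (h : ∀ a b, L a b + L b a = R a b + R b a) :
    ∑ a, ∑ b, L a b = ∑ a, ∑ b, R a b := by
  have key : ∑ a, ∑ b, (L a b + L b a) = ∑ a, ∑ b, (R a b + R b a) :=
    Finset.sum_congr rfl fun a _ => Finset.sum_congr rfl fun b _ => h a b
  simp only [Finset.sum_add_distrib] at key
  have hL : (∑ a, ∑ b, L b a) = ∑ a, ∑ b, L a b := Finset.sum_comm
  have hR : (∑ a, ∑ b, R b a) = ∑ a, ∑ b, R a b := Finset.sum_comm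
  rw [hL, hR] at key
  linear_combination key / 2

theorem concurrence_sq_as_sum_of_minors (m n : ℕ) (M : Matrix (Fin m) (Fin n) ℂ) :
    ((M * Mᴴ).trace) ^ 2 - ((M * Mᴴ) ^ 2).trace =
      ((2 * ∑ a : Fin m, ∑ a' ∈ univ.filter (fun a' => a < a'),
          ∑ b : Fin n, ∑ b' ∈ univ.filter (fun b' => b < b'),
            ‖M a b * M a' b' - M a' b * M a b'‖ ^ 2 : ℝ) : ℂ) := by
  set c : Fin m → Fin m → Fin n → Fin n → ℂ := fun a a' b b' =>
    (M a b * M a' b' - M a' b * M a b') * star (M a b * M a' b' - M a' b * M a b') with hc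
  -- rewrite RHS in terms of c
  have hnorm : ∀ z : ℂ, ((‖z‖ ^ 2 : ℝ) : ℂ) = z * star z := by
    intro z
    rw [Complex.sq_norm]
    exact (Complex.mul_conj z).symm
  have hRHS : ((2 * ∑ a : Fin m, ∑ a' ∈ univ.filter (fun a' => a < a'),
          ∑ b : Fin n, ∑ b' ∈ univ.filter (fun b' => b < b'),
            ‖M a b * M a' b' - M a' b * M a b'‖ ^ 2 : ℝ) : ℂ)
      = 2 * ∑ a : Fin m, ∑ a' ∈ univ.filter (fun a' => a < a'),
          ∑ b : Fin n, ∑ b' ∈ univ.filter (fun b' => b < b'), c a a' b b' := by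
    have hnorm2 : ∀ z : ℂ, ((‖z‖ : ℝ) : ℂ) ^ 2 = z * star z := by
      intro z
      rw [← Complex.ofReal_pow, Complex.sq_norm]
      exact (Complex.mul_conj z).symm
    push_cast
    rw [hc]
    simp only [hnorm2]
  rw [hRHS]
  -- symmetry/diagonal facts about c
  have hcsymm : ∀ a a' b b', c a a' b b' = c a' a b b' := by
    intro a a' b b'; simp only [hc, star_sub, star_mul']; ring
  have hcsymmb : ∀ a a' b b', c a a' b b' = c a a' b' b := by
    intro a a' b b'; simp only [hc, star_sub, star_mul']; ring
  have hcdiag : ∀ a b b', c a a b b' = 0 := by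
    intro a b b'; simp [hc]
  have hcdiagb : ∀ a a' b, c a a' b b = 0 := by
    intro a a' b
    simp only [hc]
    rw [show M a b * M a' b - M a' b * M a b = 0 from by ring]
    simp
  -- total sum equals 4 * filtered sum
  have h4 : (∑ a, ∑ a', ∑ b, ∑ b', c a a' b b')
      = 4 * ∑ a : Fin m, ∑ a' ∈ univ.filter (fun a' => a < a'),
          ∑ b : Fin n, ∑ b' ∈ univ.filter (fun b' => b < b'), c a a' b b' := by
    rw [half_sum (fun a a' => ∑ b, ∑ b', c a a' b b')
      (fun a a' => by
        refine Finset.sum_congr rfl fun b _ => Finset.sum_congr rfl fun b' _ => hcsymm a a' b b')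
      (fun a => by simp [hcdiag])]
    have : ∀ a a' : Fin m, (∑ b, ∑ b', c a a' b b')
        = 2 * ∑ b : Fin n, ∑ b' ∈ univ.filter (fun b' => b < b'), c a a' b b' :=
      fun a a' => half_sum (fun b b' => c a a' b b')
        (fun b b' => hcsymmb a a' b b') (fun b => hcdiagb a a' b)
    calc (2:ℂ) * ∑ a : Fin m, ∑ a' ∈ univ.filter (fun a' => a < a'), ∑ b, ∑ b', c a a' b b'
        = 2 * ∑ a : Fin m, ∑ a' ∈ univ.filter (fun a' => a < a'),
            2 * ∑ b : Fin n, ∑ b' ∈ univ.filter (fun b' => b < b'), c a a' b b' := by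
          congr 1
          exact Finset.sum_congr rfl fun a _ => Finset.sum_congr rfl fun a' _ => this a a'
      _ = 4 * ∑ a : Fin m, ∑ a' ∈ univ.filter (fun a' => a < a'),
            ∑ b : Fin n, ∑ b' ∈ univ.filter (fun b' => b < b'), c a a' b b' := by
          simp only [Finset.mul_sum]
          exact Finset.sum_congr rfl fun a _ => Finset.sum_congr rfl fun a' _ =>
            Finset.sum_congr rfl fun b _ => Finset.sum_congr rfl fun b' _ => by ring
  -- trace computations
  have htr1 : (M * Mᴴ).trace = ∑ a, ∑ b, M a b * star (M a b) := by
    simp [Matrix.trace, Matrix.mul_apply, Matrix.conjTranspose_apply, Matrix.diag]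
  have htr2 : ((M * Mᴴ) ^ 2).trace
      = ∑ a, ∑ a', (∑ b, M a b * star (M a' b)) * (∑ b', M a' b' * star (M a b')) := by
    rw [pow_two]
    simp [Matrix.trace, Matrix.mul_apply, Matrix.conjTranspose_apply, Matrix.diag]
  -- key algebraic identity: 2 * LHS = total sum
  have hkey : 2 * (((M * Mᴴ).trace) ^ 2 - ((M * Mᴴ) ^ 2).trace)
      = ∑ a, ∑ a', ∑ b, ∑ b', c a a' b b' := by
    rw [htr1, htr2, pow_two]
    rw [Finset.sum_mul_sum]
    have expand : ∀ a a' : Fin m,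
        (∑ b, M a b * star (M a b)) * (∑ b', M a' b' * star (M a' b'))
        = ∑ b, ∑ b', (M a b * star (M a b)) * (M a' b' * star (M a' b')) := by
      intro a a'; rw [Finset.sum_mul_sum]
    have expand2 : ∀ a a' : Fin m,
        (∑ b, M a b * star (M a' b)) * (∑ b', M a' b' * star (M a b'))
        = ∑ b, ∑ b', (M a b * star (M a' b)) * (M a' b' * star (M a b')) := by
      intro a a'; rw [Finset.sum_mul_sum]
    simp only [expand, expand2]
    rw [← Finset.sum_sub_distrib, Finset.mul_sum]
    simp only [← Finset.sum_sub_distrib, Finset.mul_sum]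
    refine sum_pair _ _ fun a a' => ?_
    simp only [← Finset.sum_add_distrib, ← Finset.sum_sub_distrib, Finset.mul_sum]
    refine Finset.sum_congr rfl fun b _ => Finset.sum_congr rfl fun b' _ => ?_
    simp only [hc, star_sub, star_mul']
    ring
  linear_combination hkey / 2 + (1 : ℂ) / 2 * h4
end

section
/- Let m, n be positive natural numbers and let ρ : Matrix (Fin m × Fin n) (Fin m × Fin n) ℂ be positive semidefinite with trace 1 and rank r, and let e : Fin r → (Fin m → Fin n → ℂ) be a subnormalized eigenensemble of ρ: the e α are pairwise orthogonal nonzero (with respect to the entrywise Hermitian inner product) and ρ (a,b) (a',b') = Σ_α e α a b * conj (e α a' b') for all a, a', b, b'. Then ρ is separable if and only if there exists z : Matrix (Fin (m²*n²)) (Fin r) ℂ with zᴴ * z = 1 such that for every i : Fin (m²*n²) the matrix ψ_i : Matrix (Fin m) (Fin n) ℂ given by ψ_i a b := Σ_α z i α * e α a b satisfies (tr(ψ_i * ψ_iᴴ))² = tr((ψ_i * ψ_iᴴ)²), i.e., c²(ψ_i) = 0 for each i (equivalently, Σ_i c²(ψ_i) = 0). -/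
open Matrix Kronecker
open scoped ComplexOrder

/-- A bipartite state is separable if it is a convex combination of
projectors onto product unit vectors. -/
def IsSeparableState (m n : ℕ) (ρ : Matrix (Fin m × Fin n) (Fin m × Fin n) ℂ) : Prop :=
  ∃ (I : Type) (_ : Fintype I) (p : I → ℝ) (x : I → (Fin m → ℂ)) (y : I → (Fin n → ℂ)),
    (∀ i, 0 ≤ p i) ∧ (∑ i, p i = 1) ∧
    (∀ i, ∑ a, ‖x i a‖ ^ 2 = 1) ∧ (∀ i, ∑ b, ‖y i b‖ ^ 2 = 1) ∧
    ρ = ∑ i, (p i : ℂ) • (vecMulVec (x i) (star (x i)) ⊗ₖ vecMulVec (y i) (star (y i)))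

namespace SepAuxPriv

open Finset
open scoped InnerProductSpace

noncomputable section

private lemma mul_conj_norm' (v : ℂ) : v * (starRingEnd ℂ) v = ((‖v‖ : ℝ) : ℂ) ^ 2 := by
  rw [Complex.mul_conj]; norm_cast; rw [Complex.normSq_eq_norm_sq]

private lemma sum_fin_pad {β : Type*} [AddCommMonoid β] {K N : ℕ} (hKN : K ≤ N)
    (g : Fin K → β) :
    (∑ j : Fin N, if h : (j : ℕ) < K then g ⟨j, h⟩ else 0) = ∑ i : Fin K, g i := by
  set G : ℕ → β := fun j => if h : j < K then g ⟨j, h⟩ else 0 with hG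
  have h1 : (∑ j : Fin N, if h : (j : ℕ) < K then g ⟨j, h⟩ else 0) = ∑ j : Fin N, G j := rfl
  rw [h1, Fin.sum_univ_eq_sum_range G N]
  rw [← Finset.sum_subset (Finset.range_subset_range.2 hKN) (fun i _ hi => by
    simp only [Finset.mem_range, not_lt] at hi
    simp [hG, Nat.not_lt.2 hi])]
  rw [← Fin.sum_univ_eq_sum_range G K]
  exact Finset.sum_congr rfl fun j _ => by simp [hG, j.isLt]

private lemma exch1 {ι κ : Type*} [Fintype ι] [Fintype κ] (F G : κ → ℂ) (w : ι → κ → ℂ) :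
    ∑ i, (∑ q, F q * w i q) * (∑ q, G q * (starRingEnd ℂ) (w i q))
      = ∑ q, ∑ q', (F q * G q') * (∑ i, w i q * (starRingEnd ℂ) (w i q')) := by
  simp only [Finset.sum_mul_sum]
  rw [Finset.sum_comm]
  refine Finset.sum_congr rfl fun q _ => ?_
  rw [Finset.sum_comm]
  refine Finset.sum_congr rfl fun q' _ => ?_
  rw [Finset.mul_sum]
  exact Finset.sum_congr rfl fun i _ => by ring

private lemma exch2 {κ γ : Type*} [Fintype κ] [Fintype γ] (X Y : κ → ℂ) (A B : γ → κ → ℂ) :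
    ∑ q, ∑ q', (X q * Y q') * (∑ g, A g q' * B g q)
      = ∑ g, (∑ q, X q * B g q) * (∑ q', Y q' * A g q') := by
  calc ∑ q, ∑ q', (X q * Y q') * (∑ g, A g q' * B g q)
      = ∑ q, ∑ q', ∑ g, (X q * Y q') * (A g q' * B g q) :=
        Finset.sum_congr rfl fun q _ => Finset.sum_congr rfl fun q' _ => Finset.mul_sum _ _ _
    _ = ∑ q, ∑ g, ∑ q', (X q * Y q') * (A g q' * B g q) :=
        Finset.sum_congr rfl fun q _ => Finset.sum_comm
    _ = ∑ g, ∑ q, ∑ q', (X q * Y q') * (A g q' * B g q) := Finset.sum_comm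
    _ = ∑ g, (∑ q, X q * B g q) * (∑ q', Y q' * A g q') := by
        refine Finset.sum_congr rfl fun g _ => ?_
        rw [Finset.sum_mul_sum]
        exact Finset.sum_congr rfl fun q _ => Finset.sum_congr rfl fun q' _ => by ring

private lemma swap_mul_sum {κ γ : Type*} [Fintype κ] [Fintype γ] (v : κ → ℂ) (cc : γ → ℂ)
    (Ef : γ → κ → ℂ) :
    ∑ q, v q * (∑ x, cc x * Ef x q) = ∑ x, cc x * ∑ q, v q * Ef x q := by
  simp only [Finset.mul_sum]
  rw [Finset.sum_comm]
  refine Finset.sum_congr rfl fun x _ => Finset.sum_congr rfl fun q _ => by ring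

private lemma eq_zero_of_sum_mul_conj {ι : Type*} [Fintype ι] (u : ι → ℂ)
    (h : ∑ i, u i * (starRingEnd ℂ) (u i) = 0) : ∀ i, u i = 0 := by
  have h1 : ((∑ i, ‖u i‖ ^ 2 : ℝ) : ℂ) = 0 := by
    push_cast
    rw [← h]
    exact Finset.sum_congr rfl fun i _ => (mul_conj_norm' (u i)).symm
  rw [Complex.ofReal_eq_zero] at h1
  intro i
  have h2 : ‖u i‖ ^ 2 = 0 :=
    (Finset.sum_eq_zero_iff_of_nonneg (fun j _ => sq_nonneg ‖u j‖)).1 h1 i (mem_univ i)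
  exact norm_eq_zero.1 (pow_eq_zero_iff (n := 2) (by norm_num) |>.1 h2)

private lemma conc_zero_of_product {m n : ℕ} (ψ : Matrix (Fin m) (Fin n) ℂ)
    (g : Fin m → ℂ) (h : Fin n → ℂ) (hgh : ∀ a b, ψ a b = g a * h b) :
    ((ψ * ψᴴ).trace) ^ 2 = ((ψ * ψᴴ) ^ 2).trace := by
  set H := ∑ b, h b * (starRingEnd ℂ) (h b) with hH
  set G := ∑ a, g a * (starRingEnd ℂ) (g a) with hG
  have hM : ∀ a a', (ψ * ψᴴ) a a' = (g a * (starRingEnd ℂ) (g a')) * H := by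
    intro a a'
    simp only [Matrix.mul_apply, Matrix.conjTranspose_apply, hgh, RCLike.star_def, hH,
      Finset.mul_sum]
    refine Finset.sum_congr rfl fun b _ => ?_
    rw [_root_.map_mul]; ring
  have htr : (ψ * ψᴴ).trace = G * H := by
    simp only [Matrix.trace, Matrix.diag, hM, hG, Finset.sum_mul]
  have htr2 : ((ψ * ψᴴ) ^ 2).trace = ∑ a, ∑ a', (ψ * ψᴴ) a a' * (ψ * ψᴴ) a' a := by
    rw [pow_two]
    simp only [Matrix.trace, Matrix.diag, Matrix.mul_apply]
  rw [htr, htr2]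
  calc (G * H) ^ 2 = G * (H ^ 2 * G) := by ring
    _ = ∑ a, (g a * (starRingEnd ℂ) (g a)) * (H ^ 2 * G) := by
        conv_lhs => rw [hG]
        rw [Finset.sum_mul]
    _ = ∑ a, ∑ a', (ψ * ψᴴ) a a' * (ψ * ψᴴ) a' a := by
        refine Finset.sum_congr rfl fun a _ => ?_
        rw [hG]
        simp only [Finset.mul_sum]
        refine Finset.sum_congr rfl fun a' _ => ?_
        rw [hM, hM]; ring

private lemma product_of_conc_zero {m n : ℕ} (ψ : Matrix (Fin m) (Fin n) ℂ)
    (hcc : ((ψ * ψᴴ).trace) ^ 2 = ((ψ * ψᴴ) ^ 2).trace) :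
    ∃ (g : Fin m → ℂ) (h : Fin n → ℂ), ∀ a b, ψ a b = g a * h b := by
  classical
  by_cases hψ0 : ψ = 0
  · exact ⟨0, 0, fun a b => by simp [hψ0]⟩
  set u : Fin m → EuclideanSpace ℂ (Fin n) := fun a => WithLp.toLp 2 (fun b => ψ a b) with hu
  have hMval : ∀ a a', (ψ * ψᴴ) a a' = ⟪u a', u a⟫_ℂ := by
    intro a a'
    simp only [Matrix.mul_apply, Matrix.conjTranspose_apply, PiLp.inner_apply,
      RCLike.inner_apply, hu, PiLp.toLp_apply]
    exact Finset.sum_congr rfl fun b _ => by rw [RCLike.star_def]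
  have h1 : (ψ * ψᴴ).trace = ((∑ a, ‖u a‖ ^ 2 : ℝ) : ℂ) := by
    simp only [Matrix.trace, Matrix.diag, hMval, inner_self_eq_norm_sq_to_K]
    push_cast; rfl
  have h2 : ((ψ * ψᴴ) ^ 2).trace = ((∑ a, ∑ a', ‖⟪u a, u a'⟫_ℂ‖ ^ 2 : ℝ) : ℂ) := by
    rw [pow_two]
    simp only [Matrix.trace, Matrix.diag, Matrix.mul_apply, hMval]
    push_cast
    refine Finset.sum_congr rfl fun a _ => Finset.sum_congr rfl fun a' _ => ?_
    rw [← inner_conj_symm (u a') (u a), mul_comm, Complex.mul_conj]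
    norm_cast
    rw [Complex.normSq_eq_norm_sq]
  rw [h1, h2] at hcc
  rw [← Complex.ofReal_pow, Complex.ofReal_inj] at hcc
  have hterm : ∀ a a', ‖⟪u a, u a'⟫_ℂ‖ = ‖u a‖ * ‖u a'‖ := by
    have hle : ∀ p : Fin m × Fin m, ‖⟪u p.1, u p.2⟫_ℂ‖ ^ 2 ≤ (‖u p.1‖ * ‖u p.2‖) ^ 2 :=
      fun p => pow_le_pow_left₀ (norm_nonneg _) (norm_inner_le_norm _ _) 2
    have hsum : ∑ p : Fin m × Fin m, ‖⟪u p.1, u p.2⟫_ℂ‖ ^ 2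
        = ∑ p : Fin m × Fin m, (‖u p.1‖ * ‖u p.2‖) ^ 2 := by
      rw [Fintype.sum_prod_type, Fintype.sum_prod_type]
      rw [← hcc, pow_two, Finset.sum_mul_sum]
      exact Finset.sum_congr rfl fun a _ => Finset.sum_congr rfl fun a' _ => by ring
    have heq := (Finset.sum_eq_sum_iff_of_le (fun p _ => hle p)).1 hsum
    intro a a'
    have h3 := (heq (a, a') (Finset.mem_univ _)).symm
    have h0 : (0:ℝ) ≤ ‖⟪u a, u a'⟫_ℂ‖ := norm_nonneg _
    have h0' : (0:ℝ) ≤ ‖u a‖ * ‖u a'‖ := by positivity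
    nlinarith [h3]
  obtain ⟨a₀, b₀, hab⟩ : ∃ a b, ψ a b ≠ 0 := by
    by_contra hcon
    push_neg at hcon
    exact hψ0 (by ext a b; simp [hcon])
  have hu0 : u a₀ ≠ 0 := by
    intro h0
    exact hab (by have := congrArg (· b₀) h0; simpa [hu] using this)
  have hfac : ∀ a, ∃ cfa : ℂ, ∀ b, ψ a b = cfa * ψ a₀ b := by
    intro a
    by_cases h0 : u a = 0
    · exact ⟨0, fun b => by have := congrArg (· b) h0; simpa [hu] using this⟩
    · obtain ⟨rr, -, hr⟩ := (norm_inner_eq_norm_iff hu0 h0).1 (hterm a₀ a)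
      exact ⟨rr, fun b => by have := congrArg (· b) hr; simpa [hu] using this⟩
  choose cf hcf using hfac
  exact ⟨cf, fun b => ψ a₀ b, fun a b => hcf a b⟩

private lemma coneCaraAux {E ι : Type*} [AddCommGroup E] [Module ℝ E] [DecidableEq ι]
    (f : ι → E) :
    ∀ (k : ℕ) (t : Finset ι), t.card ≤ k → ∀ c : ι → ℝ, (∀ i ∈ t, 0 ≤ c i) →
    ∃ s : Finset ι, s ⊆ t ∧ (∃ d : ι → ℝ, (∀ i ∈ s, 0 ≤ d i) ∧
      ∑ i ∈ s, d i • f i = ∑ i ∈ t, c i • f i) ∧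
      LinearIndependent ℝ (fun i : s => f i) := by
  intro k
  induction k with
  | zero =>
    intro t ht c hc
    have : t = ∅ := Finset.card_eq_zero.1 (Nat.le_zero.1 ht)
    subst this
    exact ⟨∅, Finset.Subset.refl _, ⟨c, by simp, rfl⟩, linearIndependent_empty_type⟩
  | succ k IH =>
    intro t ht c hc
    by_cases hli : LinearIndependent ℝ (fun i : t => f i)
    · exact ⟨t, Finset.Subset.refl _, ⟨c, hc, rfl⟩, hli⟩
    · obtain ⟨g, hgsum, i₁, hi₁⟩ := Fintype.not_linearIndependent_iff.1 hli
      set sgn : ℝ := if 0 < g i₁ then 1 else -1 with hsgn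
      set G : ι → ℝ := fun i => if h : i ∈ t then sgn * g ⟨i, h⟩ else 0 with hG
      have hGval : ∀ i : t, G ↑i = sgn * g i := by
        intro i
        rw [hG]
        simp only [i.2, dif_pos]
      have hGsum : ∑ i ∈ t, G i • f i = 0 := by
        rw [← Finset.sum_attach t (fun i => G i • f i)]
        have h1 : ∀ i : t, G ↑i • f ↑i = sgn • (g i • f ↑i) := by
          intro i
          rw [hGval i, smul_smul]
        rw [Finset.sum_congr rfl (fun i _ => h1 i), ← Finset.smul_sum]
        have h2 : ∑ i ∈ t.attach, g i • f ↑i = 0 := by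
          rw [← Finset.univ_eq_attach]
          exact hgsum
        rw [h2, smul_zero]
      have hGpos : 0 < G ↑i₁ := by
        rw [hGval i₁]
        rcases lt_or_ge 0 (g i₁) with hp | hp
        · rw [hsgn, if_pos hp, one_mul]; exact hp
        · rw [hsgn, if_neg (not_lt.2 hp)]
          have : g i₁ < 0 := lt_of_le_of_ne hp hi₁
          nlinarith
      set T := t.filter (fun i => 0 < G i) with hT
      have hTne : T.Nonempty := ⟨↑i₁, Finset.mem_filter.2 ⟨i₁.2, hGpos⟩⟩
      obtain ⟨i₀, hi₀T, hi₀min⟩ := Finset.exists_min_image T (fun i => c i / G i) hTne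
      have hi₀t : i₀ ∈ t := (Finset.mem_filter.1 hi₀T).1
      have hGi₀ : 0 < G i₀ := (Finset.mem_filter.1 hi₀T).2
      set θ := c i₀ / G i₀ with hθ
      have hθ0 : 0 ≤ θ := div_nonneg (hc _ hi₀t) hGi₀.le
      set c' : ι → ℝ := fun i => c i - θ * G i with hc'
      have hc'0 : ∀ i ∈ t, 0 ≤ c' i := by
        intro i hi
        show 0 ≤ c i - θ * G i
        rcases le_or_gt (G i) 0 with hGi | hGi
        · nlinarith [hc i hi]
        · have hiT : i ∈ T := Finset.mem_filter.2 ⟨hi, hGi⟩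
          have hmin := hi₀min i hiT
          rw [sub_nonneg]
          calc θ * G i ≤ (c i / G i) * G i := mul_le_mul_of_nonneg_right hmin hGi.le
            _ = c i := div_mul_cancel₀ _ hGi.ne'
      have hc'i₀ : c' i₀ = 0 := by
        show c i₀ - θ * G i₀ = 0
        rw [hθ, div_mul_cancel₀ _ hGi₀.ne', sub_self]
      have hsum' : ∑ i ∈ t.erase i₀, c' i • f i = ∑ i ∈ t, c i • f i := by
        rw [Finset.sum_erase _ (by rw [hc'i₀, zero_smul])]
        have h1 : ∀ i, c' i • f i = c i • f i - θ • (G i • f i) := by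
          intro i
          show (c i - θ * G i) • f i = _
          rw [sub_smul, smul_smul]
        rw [Finset.sum_congr rfl (fun i _ => h1 i), Finset.sum_sub_distrib,
          ← Finset.smul_sum, hGsum, smul_zero, sub_zero]
      have hcard : (t.erase i₀).card ≤ k := by
        have := Finset.card_erase_of_mem hi₀t
        omega
      obtain ⟨s, hs_sub, ⟨d, hd0, hdsum⟩, hind⟩ :=
        IH (t.erase i₀) hcard c' (fun i hi => hc'0 i (Finset.mem_of_mem_erase hi))
      exact ⟨s, hs_sub.trans (Finset.erase_subset _ _), ⟨d, hd0, hdsum.trans hsum'⟩, hind⟩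

private def hermCoordsFun {k : Type*} [Fintype k] [DecidableEq k] (τ : k ≃ Fin (Fintype.card k)) :
    Matrix k k ℂ →ₗ[ℝ] (k × k → ℝ) where
  toFun A := fun q => if τ q.1 ≤ τ q.2 then (A q.1 q.2).re else (A q.1 q.2).im
  map_add' A B := by
    funext q
    show (if τ q.1 ≤ τ q.2 then ((A + B) q.1 q.2).re else ((A + B) q.1 q.2).im) = _
    rw [Pi.add_apply]
    split_ifs with h <;> simp [Matrix.add_apply, h]
  map_smul' r A := by
    funext q
    show (if τ q.1 ≤ τ q.2 then ((r • A) q.1 q.2).re else ((r • A) q.1 q.2).im) = _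
    rw [RingHom.id_apply, Pi.smul_apply]
    split_ifs with h <;> simp [Matrix.smul_apply, Complex.smul_re, Complex.smul_im, h]

private lemma card_le_of_linIndep_herm {k : Type*} [Fintype k] [DecidableEq k]
    {ι : Type*} [Fintype ι] (v : ι → Matrix k k ℂ) (hv : LinearIndependent ℝ v)
    (hherm : ∀ i, (v i)ᴴ = v i) : Fintype.card ι ≤ Fintype.card k ^ 2 := by
  classical
  set τ : k ≃ Fin (Fintype.card k) := Fintype.equivFin k with hτ
  set V : Submodule ℝ (Matrix k k ℂ) :=
    { carrier := {A | Aᴴ = A}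
      add_mem' := fun hA hB => by
        simp only [Set.mem_setOf_eq] at *
        rw [Matrix.conjTranspose_add, hA, hB]
      zero_mem' := by simp
      smul_mem' := fun r A hA => by
        simp only [Set.mem_setOf_eq] at *
        rw [Matrix.conjTranspose_smul, hA, star_trivial] } with hV
  have hker : ∀ A : Matrix k k ℂ, Aᴴ = A → hermCoordsFun τ A = 0 → A = 0 := by
    intro A hA h0
    have hsym : ∀ i j, A j i = star (A i j) := by
      intro i j
      have h1 := congrFun (congrFun hA j) i
      rw [Matrix.conjTranspose_apply] at h1
      exact h1.symm
    have h0' : ∀ i j, (if τ i ≤ τ j then (A i j).re else (A i j).im) = 0 :=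
      fun i j => congrFun h0 (i, j)
    ext i j
    rw [Matrix.zero_apply]
    by_cases hij : τ i ≤ τ j
    · have hre : (A i j).re = 0 := by have := h0' i j; rwa [if_pos hij] at this
      by_cases heq : i = j
      · subst heq
        have him : (A i i).im = 0 := by
          have h2 := congrArg Complex.im (hsym i i)
          rw [Complex.star_def, Complex.conj_im] at h2
          linarith
        exact Complex.ext hre him
      · have hvne : (τ i : ℕ) ≠ (τ j : ℕ) :=
          fun h => heq (τ.injective (Fin.val_injective h))
        have hne : ¬ (τ j ≤ τ i) := by
          rw [Fin.le_def] at hij ⊢; omega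
        have him' : (A j i).im = 0 := by have := h0' j i; rwa [if_neg hne] at this
        have him : (A i j).im = 0 := by
          rw [hsym i j, Complex.star_def, Complex.conj_im] at him'
          linarith
        exact Complex.ext hre him
    · have hji : τ j ≤ τ i := by
        rw [Fin.le_def] at hij ⊢; omega
      have hre' : (A j i).re = 0 := by have := h0' j i; rwa [if_pos hji] at this
      have hre : (A i j).re = 0 := by
        rw [hsym i j, Complex.star_def, Complex.conj_re] at hre'
        exact hre'
      have him : (A i j).im = 0 := by have := h0' i j; rwa [if_neg hij] at this
      exact Complex.ext hre him
  have hinj : Function.Injective ((hermCoordsFun τ) ∘ₗ V.subtype) := by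
    apply LinearMap.ker_eq_bot.1
    apply LinearMap.ker_eq_bot'.2
    intro A hA0
    exact Subtype.ext (hker A A.2 hA0)
  have h1 : Fintype.card ι = Module.finrank ℝ (Submodule.span ℝ (Set.range v)) :=
    (finrank_span_eq_card hv).symm
  have h2 : Submodule.span ℝ (Set.range v) ≤ V := by
    rw [Submodule.span_le]
    rintro _ ⟨i, rfl⟩
    exact hherm i
  have h3 : Module.finrank ℝ (Submodule.span ℝ (Set.range v)) ≤ Module.finrank ℝ V :=
    Submodule.finrank_mono h2
  have h4 : Module.finrank ℝ V ≤ Module.finrank ℝ (k × k → ℝ) :=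
    LinearMap.finrank_le_finrank_of_injective hinj
  have h5 : Module.finrank ℝ (k × k → ℝ) = Fintype.card k ^ 2 := by
    rw [Module.finrank_fintype_fun_eq_card, Fintype.card_prod, pow_two]
  omega

private lemma hjw_core {N r : ℕ} {κ : Type*} [Fintype κ] (W : Fin N → κ → ℂ)
    (E : Fin r → κ → ℂ) (hEne : ∀ α, ∃ q, E α q ≠ 0)
    (hEorth : ∀ α β, α ≠ β → ∑ q, E α q * (starRingEnd ℂ) (E β q) = 0)
    (hmatch : ∀ q q', (∑ i, W i q * (starRingEnd ℂ) (W i q'))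
      = ∑ α, E α q * (starRingEnd ℂ) (E α q')) :
    ∃ z : Matrix (Fin N) (Fin r) ℂ, zᴴ * z = 1 ∧ ∀ i q, (∑ α, z i α * E α q) = W i q := by
  classical
  set rn : Fin r → ℝ := fun α => ∑ q, ‖E α q‖ ^ 2 with hrn_def
  have hrn : ∀ α, (∑ q, E α q * (starRingEnd ℂ) (E α q)) = ((rn α : ℝ) : ℂ) := by
    intro α
    rw [hrn_def]
    push_cast
    exact Finset.sum_congr rfl fun q _ => mul_conj_norm' _
  have hrne : ∀ α, rn α ≠ 0 := by
    intro α h0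
    obtain ⟨q, hq⟩ := hEne α
    apply hq
    have := (Finset.sum_eq_zero_iff_of_nonneg (fun p _ => sq_nonneg ‖E α p‖)).1 h0 q (mem_univ q)
    exact norm_eq_zero.1 (pow_eq_zero_iff (n := 2) (by norm_num) |>.1 this)
  have hrnC : ∀ α, ((rn α : ℝ) : ℂ) ≠ 0 := fun α => Complex.ofReal_ne_zero.2 (hrne α)
  have horth1 : ∀ α β, ∑ q, E α q * (starRingEnd ℂ) (E β q)
      = if α = β then ((rn α : ℝ) : ℂ) else 0 := by
    intro α β
    by_cases h : α = β
    · subst h; rw [if_pos rfl]; exact hrn α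
    · rw [if_neg h]; exact hEorth α β h
  have horth2 : ∀ α β, ∑ q, (starRingEnd ℂ) (E α q) * E β q
      = if α = β then ((rn α : ℝ) : ℂ) else 0 := by
    intro α β
    have h1 : ∑ q, (starRingEnd ℂ) (E α q) * E β q
        = (starRingEnd ℂ) (∑ q, E α q * (starRingEnd ℂ) (E β q)) := by
      rw [map_sum]
      exact Finset.sum_congr rfl fun q _ => by rw [_root_.map_mul, Complex.conj_conj]; try ring
    rw [h1, horth1]
    by_cases h : α = β
    · rw [if_pos h, Complex.conj_ofReal]
    · rw [if_neg h, map_zero]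
  set c : Fin N → Fin r → ℂ := fun i α => ∑ q, (starRingEnd ℂ) (E α q) * W i q with hc_def
  set z : Matrix (Fin N) (Fin r) ℂ := fun i α => c i α / ((rn α : ℝ) : ℂ) with hz_def
  have hsolve : ∀ i q, (∑ α, z i α * E α q) = W i q := by
    intro i
    set d : κ → ℂ := fun q => W i q - ∑ α, z i α * E α q with hd_def
    have hdE : ∀ β, ∑ q, (starRingEnd ℂ) (E β q) * d q = 0 := by
      intro β
      have h1 : ∑ q, (starRingEnd ℂ) (E β q) * d q
          = c i β - ∑ α, z i α * ∑ q, (starRingEnd ℂ) (E β q) * E α q := by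
        rw [hd_def]
        simp only [mul_sub]
        rw [Finset.sum_sub_distrib]
        congr 1
        exact swap_mul_sum (fun q => (starRingEnd ℂ) (E β q)) (z i) E
      rw [h1]
      have h2 : ∑ α, z i α * ∑ q, (starRingEnd ℂ) (E β q) * E α q
          = z i β * ((rn β : ℝ) : ℂ) := by
        rw [Finset.sum_congr rfl (fun α _ => by rw [horth2 β α])]
        simp only [mul_ite, mul_zero]
        rw [Finset.sum_ite_eq]
        simp
      rw [h2, hz_def]
      have := hrnC β
      field_simp
      ring
    have hdE' : ∀ β, ∑ q, (starRingEnd ℂ) (d q) * E β q = 0 := by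
      intro β
      have h1 : ∑ q, (starRingEnd ℂ) (d q) * E β q
          = (starRingEnd ℂ) (∑ q, (starRingEnd ℂ) (E β q) * d q) := by
        rw [map_sum]
        exact Finset.sum_congr rfl fun q _ => by rw [_root_.map_mul, Complex.conj_conj]; try ring
      rw [h1, hdE β, map_zero]
    set u : Fin N → ℂ := fun j => ∑ q, (starRingEnd ℂ) (d q) * W j q with hu_def
    have hconj_u : ∀ j, (starRingEnd ℂ) (u j) = ∑ q, d q * (starRingEnd ℂ) (W j q) := by
      intro j
      rw [hu_def]
      rw [map_sum]
      exact Finset.sum_congr rfl fun q _ => by rw [_root_.map_mul, Complex.conj_conj]; try ring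
    have hQ : ∑ j, u j * (starRingEnd ℂ) (u j) = 0 := by
      have h1 : ∑ j, u j * (starRingEnd ℂ) (u j)
          = ∑ q, ∑ q', ((starRingEnd ℂ) (d q) * d q')
              * (∑ j, W j q * (starRingEnd ℂ) (W j q')) := by
        rw [← exch1 (fun q => (starRingEnd ℂ) (d q)) d W]
        exact Finset.sum_congr rfl fun j _ => by rw [hconj_u j]
      rw [h1]
      rw [Finset.sum_congr rfl (fun q _ => Finset.sum_congr rfl (fun q' _ => by
        rw [hmatch q q']))]
      rw [← exch1 (fun q => (starRingEnd ℂ) (d q)) d E]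
      apply Finset.sum_eq_zero
      intro α _
      rw [hdE' α, zero_mul]
    have hu0 : u i = 0 := eq_zero_of_sum_mul_conj u hQ i
    have hdd : ∑ q, d q * (starRingEnd ℂ) (d q) = 0 := by
      have h1 : ∑ q, (starRingEnd ℂ) (d q) * d q
          = u i - ∑ α, z i α * ∑ q, (starRingEnd ℂ) (d q) * E α q := by
        have h0 : ∀ q, (starRingEnd ℂ) (d q) * d q
            = (starRingEnd ℂ) (d q) * W i q
              - (starRingEnd ℂ) (d q) * ∑ α, z i α * E α q := by
          intro q
          have hgen : ∀ t : ℂ, t * d q = t * W i q - t * (∑ α, z i α * E α q) := by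
            intro t
            rw [show d q = W i q - ∑ α, z i α * E α q from rfl, mul_sub]
          exact hgen _
        rw [Finset.sum_congr rfl (fun q _ => h0 q), Finset.sum_sub_distrib]
        congr 1
        exact swap_mul_sum (fun q => (starRingEnd ℂ) (d q)) (z i) E
      have h2 : ∑ q, (starRingEnd ℂ) (d q) * d q = 0 := by
        rw [h1, hu0]
        rw [Finset.sum_congr rfl (fun α _ => by rw [hdE' α, mul_zero])]
        simp
      rw [← h2]
      exact Finset.sum_congr rfl fun q _ => by ring
    have hd0 := eq_zero_of_sum_mul_conj d hdd
    intro q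
    have h3 := hd0 q
    rw [show d q = W i q - ∑ α, z i α * E α q from rfl] at h3
    exact (sub_eq_zero.1 h3).symm
  refine ⟨z, ?_, hsolve⟩
  ext α β
  rw [Matrix.mul_apply, Matrix.one_apply]
  have hentry : ∀ i, (zᴴ) α i * z i β
      = ((starRingEnd ℂ) (c i α) * c i β) / (((rn α : ℝ) : ℂ) * ((rn β : ℝ) : ℂ)) := by
    intro i
    rw [Matrix.conjTranspose_apply]
    rw [show z i α = c i α / ((rn α : ℝ) : ℂ) from rfl,
      show z i β = c i β / ((rn β : ℝ) : ℂ) from rfl]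
    rw [RCLike.star_def, map_div₀, Complex.conj_ofReal, div_mul_div_comm]
  rw [Finset.sum_congr rfl (fun i _ => hentry i), ← Finset.sum_div]
  have hconj_c : ∀ i, (starRingEnd ℂ) (c i α) = ∑ q, E α q * (starRingEnd ℂ) (W i q) := by
    intro i
    rw [show c i α = ∑ q, (starRingEnd ℂ) (E α q) * W i q from rfl]
    rw [map_sum]
    exact Finset.sum_congr rfl fun q _ => by rw [_root_.map_mul, Complex.conj_conj]; try ring
  have hcc : ∑ i, (starRingEnd ℂ) (c i α) * c i β
      = if α = β then ((rn α : ℝ) : ℂ) * ((rn β : ℝ) : ℂ) else 0 := by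
    calc ∑ i, (starRingEnd ℂ) (c i α) * c i β
        = ∑ i, (∑ q, E α q * (fun i q => (starRingEnd ℂ) (W i q)) i q)
            * (∑ q', (starRingEnd ℂ) (E β q')
              * (starRingEnd ℂ) ((fun i q => (starRingEnd ℂ) (W i q)) i q')) := by
          refine Finset.sum_congr rfl fun i _ => ?_
          rw [hconj_c i, show c i β = ∑ q, (starRingEnd ℂ) (E β q) * W i q from rfl]
          congr 1
          exact Finset.sum_congr rfl fun q _ => by rw [Complex.conj_conj]
      _ = ∑ q, ∑ q', (E α q * (starRingEnd ℂ) (E β q'))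
            * (∑ i, (starRingEnd ℂ) (W i q) * (starRingEnd ℂ) ((starRingEnd ℂ) (W i q'))) :=
          exch1 (E α) (fun q' => (starRingEnd ℂ) (E β q')) (fun i q => (starRingEnd ℂ) (W i q))
      _ = ∑ q, ∑ q', (E α q * (starRingEnd ℂ) (E β q'))
            * (∑ g, E g q' * (starRingEnd ℂ) (E g q)) := by
          refine Finset.sum_congr rfl fun q _ => Finset.sum_congr rfl fun q' _ => ?_
          congr 1
          rw [← hmatch q' q]
          exact Finset.sum_congr rfl fun i _ => by rw [Complex.conj_conj]; ring
      _ = ∑ g, (∑ q, E α q * (starRingEnd ℂ) (E g q))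
            * (∑ q', (starRingEnd ℂ) (E β q') * E g q') :=
          exch2 (E α) (fun q' => (starRingEnd ℂ) (E β q')) (fun g q' => E g q')
            (fun g q => (starRingEnd ℂ) (E g q))
      _ = ∑ g, (if α = g then ((rn α : ℝ) : ℂ) else 0)
            * (if β = g then ((rn β : ℝ) : ℂ) else 0) := by
          refine Finset.sum_congr rfl fun g _ => ?_
          rw [horth1 α g, horth2 β g]
      _ = if α = β then ((rn α : ℝ) : ℂ) * ((rn β : ℝ) : ℂ) else 0 := by
          by_cases h : α = β
          · subst h
            rw [if_pos rfl]
            have hterm : ∀ g, (if α = g then ((rn α : ℝ) : ℂ) else 0)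
                * (if α = g then ((rn α : ℝ) : ℂ) else 0)
                = if α = g then ((rn α : ℝ) : ℂ) * ((rn α : ℝ) : ℂ) else 0 := by
              intro g
              split_ifs <;> simp
            rw [Finset.sum_congr rfl (fun g _ => hterm g), Finset.sum_ite_eq]
            simp
          · rw [if_neg h]
            apply Finset.sum_eq_zero
            intro g _
            split_ifs with h1 h2
            · exact absurd (h1.trans h2.symm) h
            · rw [mul_zero]
            · rw [zero_mul]
            · rw [zero_mul]
  rw [hcc]
  by_cases h : α = β
  · rw [if_pos h, if_pos h, div_self (mul_ne_zero (hrnC α) (hrnC β))]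
  · rw [if_neg h, if_neg h, zero_div]

private lemma hjw {m n N r : ℕ} (w : Fin N → Fin m → Fin n → ℂ)
    (e : Fin r → Fin m → Fin n → ℂ) (he_ne : ∀ α, e α ≠ 0)
    (he_orth : ∀ α β, α ≠ β →
      ∑ a : Fin m, ∑ b : Fin n, e α a b * (starRingEnd ℂ) (e β a b) = 0)
    (hmatch : ∀ (a a' : Fin m) (b b' : Fin n),
      (∑ i, w i a b * (starRingEnd ℂ) (w i a' b'))
        = ∑ α, e α a b * (starRingEnd ℂ) (e α a' b')) :
    ∃ z : Matrix (Fin N) (Fin r) ℂ, zᴴ * z = 1 ∧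
      ∀ i a b, (∑ α, z i α * e α a b) = w i a b := by
  set W : Fin N → (Fin m × Fin n) → ℂ := fun i q => w i q.1 q.2 with hW
  set E : Fin r → (Fin m × Fin n) → ℂ := fun α q => e α q.1 q.2 with hE
  have hEne : ∀ α, ∃ q, E α q ≠ 0 := by
    intro α
    by_contra hcon
    push_neg at hcon
    exact he_ne α (by funext a b; exact hcon (a, b))
  have hEorth : ∀ α β, α ≠ β → ∑ q, E α q * (starRingEnd ℂ) (E β q) = 0 := by
    intro α β hab
    rw [Fintype.sum_prod_type]
    exact he_orth α β hab
  have hmatchq : ∀ q q', (∑ i, W i q * (starRingEnd ℂ) (W i q'))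
      = ∑ α, E α q * (starRingEnd ℂ) (E α q') := fun q q' => hmatch q.1 q'.1 q.2 q'.2
  obtain ⟨z, hz1, hsolve⟩ := hjw_core W E hEne hEorth hmatchq
  exact ⟨z, hz1, fun i a b => hsolve i (a, b)⟩

private lemma single_norm_sum {k : ℕ} (a₀ : Fin k) :
    ∑ a, ‖(Pi.single a₀ 1 : Fin k → ℂ) a‖ ^ 2 = 1 := by
  classical
  have h1 : ∀ a, ‖(Pi.single a₀ 1 : Fin k → ℂ) a‖ ^ 2 = if a = a₀ then 1 else 0 := by
    intro a
    by_cases h : a = a₀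
    · subst h; simp
    · simp [Pi.single_eq_of_ne h, h]
  rw [Finset.sum_congr rfl (fun a _ => h1 a), Finset.sum_ite_eq']
  simp

end

end SepAuxPriv

theorem separable_iff_stiefel_zero_concurrence (m n r : ℕ) (hm : 0 < m) (hn : 0 < n)
    (ρ : Matrix (Fin m × Fin n) (Fin m × Fin n) ℂ)
    (hρpsd : ρ.PosSemidef) (hρtr : ρ.trace = 1) (hρrank : ρ.rank = r)
    (e : Fin r → (Fin m → Fin n → ℂ))
    (he_ne : ∀ α, e α ≠ 0)
    (he_orth : ∀ α β, α ≠ β →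
      ∑ a : Fin m, ∑ b : Fin n, e α a b * (starRingEnd ℂ) (e β a b) = 0)
    (he : ∀ (a a' : Fin m) (b b' : Fin n),
      ρ (a, b) (a', b') = ∑ α : Fin r, e α a b * (starRingEnd ℂ) (e α a' b')) :
    IsSeparableState m n ρ ↔
      ∃ z : Matrix (Fin (m ^ 2 * n ^ 2)) (Fin r) ℂ, zᴴ * z = 1 ∧
        ∀ i : Fin (m ^ 2 * n ^ 2),
          letI ψ : Matrix (Fin m) (Fin n) ℂ := fun a b => ∑ α : Fin r, z i α * e α a b
          ((ψ * ψᴴ).trace) ^ 2 = ((ψ * ψᴴ) ^ 2).trace := by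
  classical
  open SepAuxPriv Finset in
  constructor
  · rintro ⟨I, hI, p, x, y, hp0, hp1, hx, hy, hρeq⟩
    set f : I → Matrix (Fin m × Fin n) (Fin m × Fin n) ℂ :=
      fun i => vecMulVec (x i) (star (x i)) ⊗ₖ vecMulVec (y i) (star (y i)) with hf
    have hfapp : ∀ i a b a' b', f i (a, b) (a', b')
        = (x i a * (starRingEnd ℂ) (x i a')) * (y i b * (starRingEnd ℂ) (y i b')) := by
      intro i a b a' b'
      simp [hf, Matrix.kroneckerMap_apply, Matrix.vecMulVec_apply, Pi.star_apply,
        RCLike.star_def]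
    have hherm : ∀ i, (f i)ᴴ = f i := by
      intro i
      ext ⟨a, b⟩ ⟨a', b'⟩
      rw [Matrix.conjTranspose_apply, hfapp, hfapp, RCLike.star_def]
      simp only [_root_.map_mul, Complex.conj_conj]
      ring
    have hρR : ρ = ∑ i, p i • f i := by
      rw [hρeq]
      refine Finset.sum_congr rfl fun i _ => ?_
      ext q q'
      rw [Matrix.smul_apply, Matrix.smul_apply, smul_eq_mul, Complex.real_smul]
    obtain ⟨s, hssub, ⟨cc, hcc0, hccsum⟩, hind⟩ :=
      coneCaraAux f (Finset.univ.card) Finset.univ le_rfl p (fun i _ => hp0 i)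
    have hcard : s.card ≤ m ^ 2 * n ^ 2 := by
      have hb := card_le_of_linIndep_herm (fun i : s => f ↑i) hind (fun i => hherm ↑i)
      rw [Fintype.card_coe] at hb
      rw [Fintype.card_prod, Fintype.card_fin, Fintype.card_fin] at hb
      calc s.card ≤ (m * n) ^ 2 := hb
        _ = m ^ 2 * n ^ 2 := by ring
    set K := s.card with hK
    set φ : Fin K ≃ {i // i ∈ s} := s.equivFin.symm with hφ
    set G : Fin K → Fin m → Fin n → ℂ := fun j a b =>
      ((Real.sqrt (cc ↑(φ j)) : ℝ) : ℂ) * (x ↑(φ j) a * y ↑(φ j) b) with hGdef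
    set w : Fin (m ^ 2 * n ^ 2) → Fin m → Fin n → ℂ :=
      fun j => if h : (j : ℕ) < K then G ⟨j, h⟩ else 0 with hwdef
    have hG2 : ∀ (j : Fin K) a b a' b', G j a b * (starRingEnd ℂ) (G j a' b')
        = ((cc ↑(φ j) : ℝ) : ℂ) * f ↑(φ j) (a, b) (a', b') := by
      intro j a b a' b'
      rw [hfapp]
      rw [show G j a b = ((Real.sqrt (cc ↑(φ j)) : ℝ) : ℂ) * (x ↑(φ j) a * y ↑(φ j) b) from rfl,
        show G j a' b' = ((Real.sqrt (cc ↑(φ j)) : ℝ) : ℂ) * (x ↑(φ j) a' * y ↑(φ j) b') from rfl]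
      simp only [_root_.map_mul, Complex.conj_ofReal]
      have hs2 : ((Real.sqrt (cc ↑(φ j)) : ℝ) : ℂ) * ((Real.sqrt (cc ↑(φ j)) : ℝ) : ℂ)
          = ((cc ↑(φ j) : ℝ) : ℂ) := by
        norm_cast
        exact Real.mul_self_sqrt (hcc0 _ (φ j).2)
      calc ((Real.sqrt (cc ↑(φ j)) : ℝ) : ℂ) * (x ↑(φ j) a * y ↑(φ j) b)
            * (((Real.sqrt (cc ↑(φ j)) : ℝ) : ℂ)
              * ((starRingEnd ℂ) (x ↑(φ j) a') * (starRingEnd ℂ) (y ↑(φ j) b')))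
          = (((Real.sqrt (cc ↑(φ j)) : ℝ) : ℂ) * ((Real.sqrt (cc ↑(φ j)) : ℝ) : ℂ))
            * ((x ↑(φ j) a * (starRingEnd ℂ) (x ↑(φ j) a'))
              * (y ↑(φ j) b * (starRingEnd ℂ) (y ↑(φ j) b'))) := by ring
        _ = _ := by rw [hs2]
    have hmatch : ∀ (a a' : Fin m) (b b' : Fin n),
        (∑ j, w j a b * (starRingEnd ℂ) (w j a' b'))
          = ∑ α, e α a b * (starRingEnd ℂ) (e α a' b') := by
      intro a a' b b'
      have h1 : ∑ j, w j a b * (starRingEnd ℂ) (w j a' b')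
          = ∑ j : Fin K, G j a b * (starRingEnd ℂ) (G j a' b') := by
        rw [← sum_fin_pad hcard (fun j : Fin K => G j a b * (starRingEnd ℂ) (G j a' b'))]
        refine Finset.sum_congr rfl fun j _ => ?_
        by_cases h : (j : ℕ) < K
        · simp only [hwdef, dif_pos h]
        · simp only [hwdef, dif_neg h]
          simp
      have h2 : ∑ j : Fin K, G j a b * (starRingEnd ℂ) (G j a' b')
          = ∑ i ∈ s, ((cc i : ℝ) : ℂ) * f i (a, b) (a', b') := by
        rw [Finset.sum_congr rfl (fun j _ => hG2 j a b a' b')]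
        rw [← Finset.sum_coe_sort s (fun i => ((cc i : ℝ) : ℂ) * f i (a, b) (a', b'))]
        exact Equiv.sum_comp φ (fun i : {i // i ∈ s} => ((cc ↑i : ℝ) : ℂ) * f ↑i (a, b) (a', b'))
      have h3 : ∑ i ∈ s, ((cc i : ℝ) : ℂ) * f i (a, b) (a', b') = ρ (a, b) (a', b') := by
        have h4 := congrFun (congrFun (hccsum.trans hρR.symm) (a, b)) (a', b')
        simp only [Matrix.sum_apply] at h4
        rw [← h4]
        exact Finset.sum_congr rfl fun i _ => by
          rw [Matrix.smul_apply, Complex.real_smul]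
      rw [h1, h2, h3, he]
    obtain ⟨z, hz1, hwsolve⟩ := hjw w e he_ne he_orth hmatch
    refine ⟨z, hz1, ?_⟩
    intro i
    by_cases h : (i : ℕ) < K
    · refine conc_zero_of_product _
        (fun a => ((Real.sqrt (cc ↑(φ ⟨i, h⟩)) : ℝ) : ℂ) * x ↑(φ ⟨i, h⟩) a)
        (y ↑(φ ⟨i, h⟩)) ?_
      intro a b
      rw [hwsolve i a b]
      rw [show w i = G ⟨i, h⟩ from by rw [hwdef]; simp [dif_pos h]]
      rw [show G ⟨i, h⟩ a b
        = ((Real.sqrt (cc ↑(φ ⟨i, h⟩)) : ℝ) : ℂ) * (x ↑(φ ⟨i, h⟩) a * y ↑(φ ⟨i, h⟩) b) from rfl]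
      ring
    · refine conc_zero_of_product _ 0 0 ?_
      intro a b
      rw [hwsolve i a b]
      rw [show w i = 0 from by rw [hwdef]; simp [dif_neg h]]
      simp
  · rintro ⟨z, hz, hcc⟩
    have hzent : ∀ α β, (∑ i, (starRingEnd ℂ) (z i β) * z i α) = if β = α then 1 else 0 := by
      intro α β
      have h1 := congrFun (congrFun hz β) α
      rw [Matrix.mul_apply, Matrix.one_apply] at h1
      rw [← h1]
      exact Finset.sum_congr rfl fun i _ => by rw [Matrix.conjTranspose_apply, RCLike.star_def]
    set ψ : Fin (m ^ 2 * n ^ 2) → Matrix (Fin m) (Fin n) ℂ :=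
      fun i => fun a b => ∑ α, z i α * e α a b with hψdef
    have hfac : ∀ i, ∃ (g : Fin m → ℂ) (h : Fin n → ℂ), ∀ a b, ψ i a b = g a * h b :=
      fun i => product_of_conc_zero (ψ i) (hcc i)
    choose gg hh hgh using hfac
    have hρent : ∀ a a' b b', (∑ i, ψ i a b * (starRingEnd ℂ) (ψ i a' b'))
        = ρ (a, b) (a', b') := by
      intro a a' b b'
      rw [he]
      have h1 : ∀ i, ψ i a b * (starRingEnd ℂ) (ψ i a' b')
          = (∑ α, e α a b * z i α) * (∑ β, (starRingEnd ℂ) (e β a' b')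
            * (starRingEnd ℂ) (z i β)) := by
        intro i
        congr 1
        · rw [show ψ i a b = ∑ α, z i α * e α a b from rfl]
          exact Finset.sum_congr rfl fun α _ => mul_comm _ _
        · rw [show ψ i a' b' = ∑ β, z i β * e β a' b' from rfl, map_sum]
          exact Finset.sum_congr rfl fun β _ => by rw [_root_.map_mul]; ring
      rw [Finset.sum_congr rfl (fun i _ => h1 i),
        exch1 (fun α => e α a b) (fun β => (starRingEnd ℂ) (e β a' b')) (fun i α => z i α)]
      have h2 : ∀ α β, (∑ i, z i α * (starRingEnd ℂ) (z i β)) = if β = α then 1 else 0 := by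
        intro α β
        rw [← hzent α β]
        exact Finset.sum_congr rfl fun i _ => mul_comm _ _
      rw [Finset.sum_congr rfl (fun α _ => Finset.sum_congr rfl (fun β _ => by rw [h2 α β]))]
      refine Finset.sum_congr rfl fun α _ => ?_
      rw [Finset.sum_congr rfl (fun β _ => by rw [mul_ite, mul_one, mul_zero]),
        Finset.sum_ite_eq']
      simp
    set Gs : Fin (m ^ 2 * n ^ 2) → ℝ := fun i => ∑ a, ‖gg i a‖ ^ 2 with hGs
    set Hs : Fin (m ^ 2 * n ^ 2) → ℝ := fun i => ∑ b, ‖hh i b‖ ^ 2 with hHs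
    have hGs0 : ∀ i, 0 ≤ Gs i := fun i => Finset.sum_nonneg fun a _ => sq_nonneg _
    have hHs0 : ∀ i, 0 ≤ Hs i := fun i => Finset.sum_nonneg fun b _ => sq_nonneg _
    set p : Fin (m ^ 2 * n ^ 2) → ℝ := fun i => Gs i * Hs i with hpdef
    set xx : Fin (m ^ 2 * n ^ 2) → Fin m → ℂ := fun i =>
      if Gs i = 0 ∨ Hs i = 0 then Pi.single ⟨0, hm⟩ 1
      else fun a => (((Real.sqrt (Gs i))⁻¹ : ℝ) : ℂ) * gg i a with hxx
    set yy : Fin (m ^ 2 * n ^ 2) → Fin n → ℂ := fun i =>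
      if Gs i = 0 ∨ Hs i = 0 then Pi.single ⟨0, hn⟩ 1
      else fun b => (((Real.sqrt (Hs i))⁻¹ : ℝ) : ℂ) * hh i b with hyy
    have hgz : ∀ i, Gs i = 0 → ∀ a, gg i a = 0 := by
      intro i h0 a
      have := (Finset.sum_eq_zero_iff_of_nonneg (fun a _ => sq_nonneg ‖gg i a‖)).1 h0 a
        (Finset.mem_univ a)
      exact norm_eq_zero.1 (pow_eq_zero_iff (n := 2) (by norm_num) |>.1 this)
    have hhz : ∀ i, Hs i = 0 → ∀ b, hh i b = 0 := by
      intro i h0 b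
      have := (Finset.sum_eq_zero_iff_of_nonneg (fun b _ => sq_nonneg ‖hh i b‖)).1 h0 b
        (Finset.mem_univ b)
      exact norm_eq_zero.1 (pow_eq_zero_iff (n := 2) (by norm_num) |>.1 this)
    have hkey : ∀ i a b a' b', ((p i : ℝ) : ℂ)
        * ((xx i a * (starRingEnd ℂ) (xx i a')) * (yy i b * (starRingEnd ℂ) (yy i b')))
        = ψ i a b * (starRingEnd ℂ) (ψ i a' b') := by
      intro i a b a' b'
      by_cases hd : Gs i = 0 ∨ Hs i = 0
      · have hp0' : p i = 0 := by
          rcases hd with h | h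
          · rw [hpdef]; simp [h]
          · rw [hpdef]; simp [h]
        have hψz : ψ i a b = 0 := by
          rw [hgh i a b]
          rcases hd with h | h
          · rw [hgz i h a, zero_mul]
          · rw [hhz i h b, mul_zero]
        rw [hp0', hψz]
        simp
      · have hd' := hd
        push_neg at hd'
        obtain ⟨hGne, hHne⟩ := hd'
        have hGpos : 0 < Gs i := lt_of_le_of_ne (hGs0 i) (Ne.symm hGne)
        have hHpos : 0 < Hs i := lt_of_le_of_ne (hHs0 i) (Ne.symm hHne)
        have hxv : xx i = fun a => (((Real.sqrt (Gs i))⁻¹ : ℝ) : ℂ) * gg i a := by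
          simp only [hxx]
          rw [if_neg hd]
        have hyv : yy i = fun b => (((Real.sqrt (Hs i))⁻¹ : ℝ) : ℂ) * hh i b := by
          simp only [hyy]
          rw [if_neg hd]
        rw [hxv, hyv]
        have hsG : ((Real.sqrt (Gs i) : ℝ) : ℂ) * ((Real.sqrt (Gs i) : ℝ) : ℂ)
            = ((Gs i : ℝ) : ℂ) := by
          norm_cast
          exact Real.mul_self_sqrt (hGs0 i)
        have hsGne : ((Real.sqrt (Gs i) : ℝ) : ℂ) ≠ 0 := by
          norm_cast
          exact (Real.sqrt_ne_zero'.2 hGpos)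
        have hsH : ((Real.sqrt (Hs i) : ℝ) : ℂ) * ((Real.sqrt (Hs i) : ℝ) : ℂ)
            = ((Hs i : ℝ) : ℂ) := by
          norm_cast
          exact Real.mul_self_sqrt (hHs0 i)
        have hsHne : ((Real.sqrt (Hs i) : ℝ) : ℂ) ≠ 0 := by
          norm_cast
          exact (Real.sqrt_ne_zero'.2 hHpos)
        rw [hgh i a b, hgh i a' b']
        simp only [_root_.map_mul, map_inv₀, Complex.conj_ofReal]
        rw [show ((p i : ℝ) : ℂ) = ((Gs i : ℝ) : ℂ) * ((Hs i : ℝ) : ℂ) from by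
          rw [hpdef]; push_cast; ring]
        rw [← hsG, ← hsH]
        simp only [Complex.ofReal_inv]
        field_simp
    have hxnorm : ∀ i, ∑ a, ‖xx i a‖ ^ 2 = 1 := by
      intro i
      by_cases hd : Gs i = 0 ∨ Hs i = 0
      · simp only [hxx]
        rw [if_pos hd]
        exact single_norm_sum _
      · have hGne : Gs i ≠ 0 := fun h => hd (Or.inl h)
        have hGpos : 0 < Gs i := lt_of_le_of_ne (hGs0 i) (Ne.symm hGne)
        simp only [hxx]
        rw [if_neg hd]
        have : ∀ a, ‖(((Real.sqrt (Gs i))⁻¹ : ℝ) : ℂ) * gg i a‖ ^ 2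
            = (Gs i)⁻¹ * ‖gg i a‖ ^ 2 := by
          intro a
          rw [norm_mul, mul_pow, Complex.norm_real, Real.norm_eq_abs,
            abs_of_nonneg (by positivity)]
          rw [inv_pow, Real.sq_sqrt (hGs0 i)]
        rw [Finset.sum_congr rfl (fun a _ => this a), ← Finset.mul_sum]
        exact inv_mul_cancel₀ hGne
    have hynorm : ∀ i, ∑ b, ‖yy i b‖ ^ 2 = 1 := by
      intro i
      by_cases hd : Gs i = 0 ∨ Hs i = 0
      · simp only [hyy]
        rw [if_pos hd]
        exact single_norm_sum _
      · have hHne : Hs i ≠ 0 := fun h => hd (Or.inr h)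
        have hHpos : 0 < Hs i := lt_of_le_of_ne (hHs0 i) (Ne.symm hHne)
        simp only [hyy]
        rw [if_neg hd]
        have : ∀ b, ‖(((Real.sqrt (Hs i))⁻¹ : ℝ) : ℂ) * hh i b‖ ^ 2
            = (Hs i)⁻¹ * ‖hh i b‖ ^ 2 := by
          intro b
          rw [norm_mul, mul_pow, Complex.norm_real, Real.norm_eq_abs,
            abs_of_nonneg (by positivity)]
          rw [inv_pow, Real.sq_sqrt (hHs0 i)]
        rw [Finset.sum_congr rfl (fun b _ => this b), ← Finset.mul_sum]
        exact inv_mul_cancel₀ hHne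
    have hp0 : ∀ i, 0 ≤ p i := fun i => mul_nonneg (hGs0 i) (hHs0 i)
    have hψsum : ∀ i, ∑ a, ∑ b, ψ i a b * (starRingEnd ℂ) (ψ i a b) = ((p i : ℝ) : ℂ) := by
      intro i
      have h1 : ∀ a b, ψ i a b * (starRingEnd ℂ) (ψ i a b)
          = ((‖gg i a‖ ^ 2 * ‖hh i b‖ ^ 2 : ℝ) : ℂ) := by
        intro a b
        rw [mul_conj_norm', hgh i a b, norm_mul]
        push_cast
        ring
      rw [Finset.sum_congr rfl (fun a _ => Finset.sum_congr rfl (fun b _ => h1 a b))]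
      simp only [hpdef, hGs, hHs]
      push_cast
      rw [Finset.sum_mul_sum]
    have hp1 : ∑ i, p i = 1 := by
      have htr : ((∑ i, p i : ℝ) : ℂ) = 1 := by
        rw [← hρtr]
        have e1 : ρ.trace = ∑ q : Fin m × Fin n, ρ q q := by
          rw [Matrix.trace]
          rfl
        rw [e1, Fintype.sum_prod_type]
        rw [Finset.sum_congr rfl (fun a _ => Finset.sum_congr rfl
          (fun b _ => (hρent a a b b).symm))]
        have e2 : ∑ a, ∑ b, ∑ i, ψ i a b * (starRingEnd ℂ) (ψ i a b)
            = ∑ i, ∑ a, ∑ b, ψ i a b * (starRingEnd ℂ) (ψ i a b) := by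
          rw [Finset.sum_congr rfl (fun a _ => Finset.sum_comm), Finset.sum_comm]
        rw [e2, Finset.sum_congr rfl (fun i _ => hψsum i)]
        push_cast
        rfl
      exact_mod_cast htr
    refine ⟨Fin (m ^ 2 * n ^ 2), inferInstance, p, xx, yy, hp0, hp1, hxnorm, hynorm, ?_⟩
    ext ⟨a, b⟩ ⟨a', b'⟩
    rw [Matrix.sum_apply]
    rw [← hρent a a' b b']
    refine Finset.sum_congr rfl fun i _ => ?_
    rw [← hkey i a b a' b']
    simp only [Matrix.smul_apply, Matrix.kroneckerMap_apply, Matrix.vecMulVec_apply,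
      Pi.star_apply, RCLike.star_def, smul_eq_mul]
    try ring
end

section
/- For every real β > 0 and every complex number y, the Hubbard–Stratonovich identity holds: ∫_{s ∈ ℂ} (π*β)⁻¹ * Complex.exp (−(‖s‖² : ℂ)/β + Complex.I * (conj s) * y + Complex.I * s * (conj y)) d(volume s) = Complex.exp (−β * ‖y‖²), where the integral is with respect to the Lebesgue (area) measure on ℂ. -/
open MeasureTheory Complex

theorem hubbard_stratonovich (β : ℝ) (hβ : 0 < β) (y : ℂ) :
    ∫ s : ℂ, ((Real.pi * β : ℝ) : ℂ)⁻¹ *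
        Complex.exp (-(‖s‖ ^ 2 : ℝ) / (β : ℂ) +
          Complex.I * (starRingEnd ℂ s) * y + Complex.I * s * (starRingEnd ℂ y)) =
      Complex.exp (-(β : ℂ) * (‖y‖ ^ 2 : ℝ)) := by
  have hb : 0 < ((β : ℂ)⁻¹).re := by
    rw [← Complex.ofReal_inv]
    simpa using inv_pos.mpr hβ
  have key := GaussianFourier.integral_cexp_neg_mul_sq_norm_add (V := ℂ) hb (2 * Complex.I) y
  have hint : ∀ s : ℂ,
      Complex.exp (-(‖s‖ ^ 2 : ℝ) / (β : ℂ) +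
          Complex.I * (starRingEnd ℂ s) * y + Complex.I * s * (starRingEnd ℂ y)) =
      Complex.exp (-(β : ℂ)⁻¹ * (‖s‖ : ℂ) ^ 2 + (2 * Complex.I) * ((inner ℝ y s : ℝ) : ℂ)) := by
    intro s
    congr 1
    rw [Complex.inner, mul_comm s (starRingEnd ℂ y)]
    have h2 : ((((starRingEnd ℂ) y * s).re : ℝ) : ℂ)
        = ((starRingEnd ℂ) y * s + (starRingEnd ℂ) ((starRingEnd ℂ) y * s)) / 2 := by
      rw [Complex.add_conj]
      push_cast
      ring
    rw [h2]
    simp only [map_mul, RingHomCompTriple.comp_apply, RingHom.id_apply]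
    push_cast
    ring
  simp_rw [hint, integral_const_mul, key]
  have hrank : (Module.finrank ℝ ℂ : ℂ) / 2 = 1 := by
    rw [Complex.finrank_real_complex]; norm_num
  rw [hrank, Complex.cpow_one]
  have hπβ : ((Real.pi * β : ℝ) : ℂ) ≠ 0 := by
    push_cast
    exact mul_ne_zero (Complex.ofReal_ne_zero.mpr Real.pi_ne_zero)
      (Complex.ofReal_ne_zero.mpr hβ.ne')
  have hdiv : (↑Real.pi / ((β : ℂ))⁻¹) = ((Real.pi * β : ℝ) : ℂ) := by
    push_cast
    field_simp
  rw [hdiv, ← mul_assoc, inv_mul_cancel₀ hπβ, one_mul]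
  congr 1
  have hβc : (β : ℂ) ≠ 0 := Complex.ofReal_ne_zero.mpr hβ.ne'
  field_simp
  ring_nf
  simp [Complex.I_sq]
end

section
/- Let r be a natural number, let h : Matrix (Fin r) (Fin r) ℂ be a positive definite matrix with real entries (h = conj h and h is Hermitian positive definite), let ω : Matrix (Fin r) (Fin r) ℂ be Hermitian and invertible, and let s ∈ ℂ. Let q := h.posDef.sqrt be the positive definite square root of h and set ω' := q⁻¹ * ω * q⁻¹. Then the determinant of the 2r × 2r block matrix M := Matrix.fromBlocks ω (−(2*Complex.I*s) • h) (−(2*Complex.I*(conj s)) • h) (conj ω) equals (det h)² * det((4*(‖s‖² : ℂ)) • (1 : Matrix (Fin r) (Fin r) ℂ) + ω' * conj ω'). -/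
open Matrix
open scoped ComplexOrder

theorem det_block_matrix_hs (r : ℕ) (h ω : Matrix (Fin r) (Fin r) ℂ)
    (hh : h.PosDef) (hreal : h.map (starRingEnd ℂ) = h)
    (hω : ω.IsHermitian) (hωinv : IsUnit ω.det) (s : ℂ) :
    letI q : Matrix (Fin r) (Fin r) ℂ :=
      hh.posSemidef.1.eigenvectorUnitary.1 *
        diagonal ((↑) ∘ (√·) ∘ hh.posSemidef.1.eigenvalues) *
        (star hh.posSemidef.1.eigenvectorUnitary : Matrix (Fin r) (Fin r) ℂ)
    letI ω' : Matrix (Fin r) (Fin r) ℂ := q⁻¹ * ω * q⁻¹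
    (Matrix.fromBlocks ω (-(2 * Complex.I * s) • h)
        (-(2 * Complex.I * (starRingEnd ℂ s)) • h) (ω.map (starRingEnd ℂ))).det =
      h.det ^ 2 *
        ((4 * (‖s‖ ^ 2 : ℝ) : ℂ) • (1 : Matrix (Fin r) (Fin r) ℂ) +
          ω' * ω'.map (starRingEnd ℂ)).det := by
  set q : Matrix (Fin r) (Fin r) ℂ :=
      hh.posSemidef.1.eigenvectorUnitary.1 *
        diagonal ((↑) ∘ (√·) ∘ hh.posSemidef.1.eigenvalues) *
        (star hh.posSemidef.1.eigenvectorUnitary : Matrix (Fin r) (Fin r) ℂ) with hqdef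
  open MatrixOrder in
  have hhnn : 0 ≤ h := Matrix.nonneg_iff_posSemidef.mpr hh.posSemidef
  open MatrixOrder in
  have hqsqrt : q = CFC.sqrt h := by
    rw [CFC.sqrt_eq_real_sqrt h hhnn, cfcₙ_eq_cfc (hf0 := Real.sqrt_zero),
      hh.posSemidef.1.cfc_eq]
    rfl
  open MatrixOrder in
  have hqps : q.PosSemidef := by
    rw [hqsqrt]; exact Matrix.nonneg_iff_posSemidef.mp (CFC.sqrt_nonneg h)
  set c : ℂ := (4 * (‖s‖ ^ 2 : ℝ) : ℂ) with hc
  -- basic facts about q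
  open MatrixOrder in
  have hq2 : q * q = h := by rw [hqsqrt]; exact CFC.sqrt_mul_sqrt_self h hhnn
  have hhdet : h.det ≠ 0 := hh.det_pos.ne'
  have hqdet : q.det ≠ 0 := by
    intro h0
    apply hhdet
    rw [← hq2, det_mul, h0, mul_zero]
  have hqinv : q⁻¹ * q = 1 := nonsing_inv_mul q hqdet.isUnit
  have hqinv' : q * q⁻¹ = 1 := mul_nonsing_inv q hqdet.isUnit
  -- q is a real matrix
  have hqconj : q.map (starRingEnd ℂ) = q := by
    have hps : (q.map (starRingEnd ℂ)).PosSemidef := by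
      have := hqps.transpose
      rwa [← hqps.isHermitian, conjTranspose] at this
    have hsq : (q.map (starRingEnd ℂ)) ^ 2 = h := by
      rw [sq, ← Matrix.map_mul, hq2, hreal]
    open MatrixOrder in
    nth_rw 2 [hqsqrt]
    rw [eq_comm, CFC.sqrt_eq_iff h _ hhnn (Matrix.nonneg_iff_posSemidef.mpr hps), ← sq, hsq]
  have hqinvconj : (q⁻¹).map (starRingEnd ℂ) = q⁻¹ := by
    refine (Matrix.inv_eq_left_inv ?_).symm
    calc (q⁻¹).map (starRingEnd ℂ) * q
        = (q⁻¹).map (starRingEnd ℂ) * q.map (starRingEnd ℂ) := by rw [hqconj]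
      _ = (q⁻¹ * q).map (starRingEnd ℂ) := (Matrix.map_mul).symm
      _ = 1 := by rw [hqinv]; simp
  -- invertibility of ω and h
  haveI : Invertible ω := ω.invertibleOfIsUnitDet hωinv
  have hhi : h * h⁻¹ = 1 := mul_nonsing_inv h hhdet.isUnit
  have hinvh : h⁻¹ = q⁻¹ * q⁻¹ := by rw [← hq2, Matrix.mul_inv_rev]
  -- scalar computation
  have hss : (starRingEnd ℂ) s * s = ((‖s‖ ^ 2 : ℝ) : ℂ) := by
    rw [mul_comm, Complex.mul_conj, Complex.normSq_eq_norm_sq]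
  have hba : (-(2 * Complex.I * (starRingEnd ℂ s))) * (-(2 * Complex.I * s)) = -c := by
    rw [hc]
    linear_combination (4 * (starRingEnd ℂ s) * s) * Complex.I_sq - 4 * hss
  set X : Matrix (Fin r) (Fin r) ℂ :=
    c • (ω⁻¹ * h) + h⁻¹ * ω.map (starRingEnd ℂ) with hX
  -- left side
  rw [Matrix.det_fromBlocks₁₁, invOf_eq_nonsing_inv]
  have hleft : ω.map (starRingEnd ℂ) -
      (-(2 * Complex.I * (starRingEnd ℂ s)) • h) * ω⁻¹ * (-(2 * Complex.I * s) • h)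
      = h * X := by
    rw [hX]
    simp only [Matrix.mul_add, Matrix.mul_smul, Matrix.smul_mul, smul_smul, Matrix.mul_assoc]
    rw [mul_comm (-(2 * Complex.I * s)), hba, ← Matrix.mul_assoc h h⁻¹, hhi, Matrix.one_mul, neg_smul, sub_neg_eq_add, add_comm]
  rw [hleft]
  -- right side
  have hωX : ω * X = c • h + ω * (h⁻¹ * ω.map (starRingEnd ℂ)) := by
    rw [hX, Matrix.mul_add, Matrix.mul_smul, ← Matrix.mul_assoc ω ω⁻¹ h,
      mul_nonsing_inv ω hωinv, Matrix.one_mul]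
  have hright : c • (1 : Matrix (Fin r) (Fin r) ℂ) +
      (q⁻¹ * ω * q⁻¹) * (q⁻¹ * ω * q⁻¹).map (starRingEnd ℂ)
      = q⁻¹ * (ω * X) * q⁻¹ := by
    rw [hωX, Matrix.map_mul, Matrix.map_mul, hqinvconj, hinvh]
    rw [Matrix.mul_add, Matrix.add_mul, Matrix.mul_smul, Matrix.smul_mul]
    refine congrArg₂ (· + ·) ?_ ?_
    · rw [← hq2]
      simp only [Matrix.mul_assoc, hqinv', Matrix.mul_one, hqinv]
    · simp only [Matrix.mul_assoc]
  rw [hright]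
  -- determinant bookkeeping
  have hdetq2 : q.det * q.det = h.det := by rw [← det_mul, hq2]
  rw [det_mul, det_mul, det_mul, det_mul, det_nonsing_inv, Ring.inverse_eq_inv']
  field_simp
  rw [← hdetq2]
  ring
end
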